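/- arXiv:0706.1326 — 6 statements merged into one kernel-verified Lean document; each statement's English description precedes it below -/
import Mathlib

section
/- Every complete separable ultrahomogeneous metric space contains a countable dense subspace which is itself an ultrahomogeneous metric space. -/
open Metric

/-- A metric space is ultrahomogeneous if every isometry between two finite
subspaces extends to a surjective self-isometry of the whole space. -/
def IsUltrahomogeneous (X : Type*) [MetricSpace X] : Prop :=
  ∀ F : Set X, F.Finite → ∀ φ : F → X, Isometry φ →
    ∃ ψ : X ≃ᵢ X, ∀ x : F, ψ x = φ x

/-- A metric space `X` is `ε`-indivisible if for every finite coloring there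
is a color `i` and a subset `Y ⊆ X` isometric to `X` with every point of `Y`
within distance `ε` of the `i`-th color class. -/
def EpsIndivisible (X : Type*) [MetricSpace X] (ε : ℝ) : Prop :=
  ∀ k : ℕ, 0 < k → ∀ χ : X → Fin k, ∃ i : Fin k, ∃ e : X → X, Isometry e ∧
    ∀ z : X, ∃ x : X, χ x = i ∧ dist (e z) x ≤ ε

/-- Approximate indivisibility (oscillation stability): `ε`-indivisible for
every `ε > 0`. -/
def ApproxIndivisible (X : Type*) [MetricSpace X] : Prop :=
  ∀ ε : ℝ, 0 < ε → EpsIndivisible X ε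

/-- Exact indivisibility: some color class contains an isometric copy of `X`. -/
def Indivisible (X : Type*) [MetricSpace X] : Prop :=
  ∀ k : ℕ, 0 < k → ∀ χ : X → Fin k, ∃ i : Fin k, ∃ e : X → X, Isometry e ∧
    ∀ z : X, χ (e z) = i

/-- The Urysohn sphere: complete, separable, ultrahomogeneous, of diameter at
most `1`, and universal for separable metric spaces of diameter at most `1`. -/
def IsUrysohnSphere (S : Type) [MetricSpace S] : Prop :=
  CompleteSpace S ∧ TopologicalSpace.SeparableSpace S ∧ IsUltrahomogeneous S ∧
  (∀ x y : S, dist x y ≤ 1) ∧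
  ∀ (Y : Type) [MetricSpace Y], TopologicalSpace.SeparableSpace Y →
    (∀ a b : Y, dist a b ≤ 1) → ∃ f : Y → S, Isometry f

/-- The rational Urysohn sphere: countable, ultrahomogeneous, with distances in
`ℚ ∩ [0,1]`, universal for countable metric spaces with distances in `ℚ ∩ [0,1]`. -/
def IsRationalUrysohnSphere (S : Type) [MetricSpace S] : Prop :=
  Countable S ∧ IsUltrahomogeneous S ∧
  (∀ x y : S, ∃ q : ℚ, 0 ≤ q ∧ q ≤ 1 ∧ dist x y = q) ∧
  ∀ (Y : Type) [MetricSpace Y], Countable Y →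
    (∀ a b : Y, ∃ q : ℚ, 0 ≤ q ∧ q ≤ 1 ∧ dist a b = q) →
    ∃ f : Y → S, Isometry f

/-- `[0,1]_m = {k/m : 0 ≤ k ≤ m}`. -/
def distSetM (m : ℕ) : Set ℝ := {d | ∃ k : ℕ, k ≤ m ∧ d = (k : ℝ) / m}

/-- The space `S_m`: countable, ultrahomogeneous, with distances in `[0,1]_m`,
universal for countable metric spaces with distances in `[0,1]_m`. -/
def IsUrysohnSphereM (m : ℕ) (S : Type) [MetricSpace S] : Prop :=
  Countable S ∧ IsUltrahomogeneous S ∧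
  (∀ x y : S, dist x y ∈ distSetM m) ∧
  ∀ (Y : Type) [MetricSpace Y], Countable Y →
    (∀ a b : Y, dist a b ∈ distSetM m) → ∃ f : Y → S, Isometry f

open Classical in
noncomputable def extIso {X : Type} [MetricSpace X] (a b : List X) : X ≃ᵢ X :=
  if h : ∃ g : X ≃ᵢ X, ∀ p ∈ a.zip b, g p.1 = p.2 then h.choose else IsometryEquiv.refl X

lemma extIso_spec {X : Type} [MetricSpace X] (a b : List X)
    (h : ∃ g : X ≃ᵢ X, ∀ p ∈ a.zip b, g p.1 = p.2) :
    ∀ p ∈ a.zip b, extIso a b p.1 = p.2 := by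
  classical
  rw [extIso, dif_pos h]
  exact h.choose_spec

noncomputable def YS {X : Type} [MetricSpace X] (D : Set X) : ℕ → Set X
  | 0 => D
  | n+1 => YS D n ∪ ⋃ a ∈ {l : List X | ∀ x ∈ l, x ∈ YS D n},
      ⋃ b ∈ {l : List X | ∀ x ∈ l, x ∈ YS D n},
        (extIso a b '' YS D n ∪ (extIso a b).symm '' YS D n)

lemma countable_lists {X : Type} {s : Set X} (hs : s.Countable) :
    {l : List X | ∀ x ∈ l, x ∈ s}.Countable := by
  have : Countable s := hs.to_subtype
  have : {l : List X | ∀ x ∈ l, x ∈ s} ⊆ Set.range (List.map (Subtype.val : s → X)) := by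
    intro l hl
    refine ⟨l.attach.map fun x => ⟨x.1, hl x.1 x.2⟩, ?_⟩
    simp [List.map_map, Function.comp]
  exact (Set.countable_range _).mono this

lemma YS_countable {X : Type} [MetricSpace X] {D : Set X} (hD : D.Countable) (n : ℕ) :
    (YS D n).Countable := by
  induction n with
  | zero => exact hD
  | succ n ih =>
    refine ih.union ?_
    refine Set.Countable.biUnion (countable_lists ih) fun a _ => ?_
    refine Set.Countable.biUnion (countable_lists ih) fun b _ => ?_
    exact (ih.image _).union (ih.image _)

lemma YS_mono {X : Type} [MetricSpace X] (D : Set X) : Monotone (YS D) := by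
  apply monotone_nat_of_le_succ
  intro n
  exact Set.subset_union_left

lemma YS_step {X : Type} [MetricSpace X] (D : Set X) {a b : List X} {n : ℕ}
    (ha : ∀ x ∈ a, x ∈ YS D n) (hb : ∀ x ∈ b, x ∈ YS D n) {x : X} (hx : x ∈ YS D n) :
    extIso a b x ∈ YS D (n+1) ∧ (extIso a b).symm x ∈ YS D (n+1) := by
  constructor <;>
  · refine Set.mem_union_right _ ?_
    refine Set.mem_biUnion ha ?_
    refine Set.mem_biUnion hb ?_
    first
    | exact Set.mem_union_left _ ⟨x, hx, rfl⟩
    | exact Set.mem_union_right _ ⟨x, hx, rfl⟩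

lemma exists_stage {X : Type} [MetricSpace X] (D : Set X) (l : List X)
    (hl : ∀ x ∈ l, x ∈ ⋃ n, YS D n) : ∃ n, ∀ x ∈ l, x ∈ YS D n := by
  induction l with
  | nil => exact ⟨0, by simp⟩
  | cons y l ih =>
    obtain ⟨n, hn⟩ := ih fun x hx => hl x (List.mem_cons_of_mem _ hx)
    obtain ⟨m, hm⟩ := Set.mem_iUnion.1 (hl y List.mem_cons_self)
    refine ⟨max n m, ?_⟩
    intro x hx
    rcases List.mem_cons.1 hx with rfl | hx
    · exact YS_mono D (le_max_right n m) hm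
    · exact YS_mono D (le_max_left n m) (hn x hx)

lemma extIso_invariant {X : Type} [MetricSpace X] (D : Set X) {a b : List X} {n : ℕ}
    (ha : ∀ x ∈ a, x ∈ YS D n) (hb : ∀ x ∈ b, x ∈ YS D n) {x : X}
    (hx : x ∈ ⋃ m, YS D m) :
    extIso a b x ∈ ⋃ m, YS D m ∧ (extIso a b).symm x ∈ ⋃ m, YS D m := by
  obtain ⟨m, hm⟩ := Set.mem_iUnion.1 hx
  have hx' : x ∈ YS D (max n m) := YS_mono D (le_max_right n m) hm
  have ha' : ∀ y ∈ a, y ∈ YS D (max n m) := fun y hy => YS_mono D (le_max_left n m) (ha y hy)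
  have hb' : ∀ y ∈ b, y ∈ YS D (max n m) := fun y hy => YS_mono D (le_max_left n m) (hb y hy)
  obtain ⟨h1, h2⟩ := YS_step D ha' hb' hx'
  exact ⟨Set.mem_iUnion.2 ⟨_, h1⟩, Set.mem_iUnion.2 ⟨_, h2⟩⟩


/-- Every complete separable ultrahomogeneous metric space contains a countable
dense subspace which is itself an ultrahomogeneous metric space. -/
theorem stmt0 (X : Type) [MetricSpace X] [CompleteSpace X]
    [TopologicalSpace.SeparableSpace X] (hX : IsUltrahomogeneous X) :
    ∃ Y : Set X, Y.Countable ∧ Dense Y ∧ IsUltrahomogeneous Y := by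
  obtain ⟨D, hDc, hDd⟩ := TopologicalSpace.exists_countable_dense X
  refine ⟨⋃ n, YS D n, Set.countable_iUnion (YS_countable hDc), ?_, ?_⟩
  · exact hDd.mono (Set.subset_iUnion (YS D) 0)
  set Y : Set X := ⋃ n, YS D n with hY
  rintro F hF φ hφ
  -- transfer to X
  set F' : Set X := Subtype.val '' F with hF'
  have hF'fin : F'.Finite := hF.image _
  -- the transferred map
  set φ' : F' → X := fun z => (φ ⟨z.2.choose, z.2.choose_spec.1⟩ : Y) with hφ'def
  have hval : ∀ z : F', (z.2.choose : X) = z.1 := fun z => z.2.choose_spec.2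
  have hφ'iso : Isometry φ' := by
    apply Isometry.of_dist_eq
    intro z w
    have h1 : dist (φ' z) (φ' w)
        = dist (φ ⟨z.2.choose, z.2.choose_spec.1⟩) (φ ⟨w.2.choose, w.2.choose_spec.1⟩) :=
      (Subtype.dist_eq _ _).symm
    rw [h1, hφ.dist_eq]
    have : dist (⟨z.2.choose, z.2.choose_spec.1⟩ : F) (⟨w.2.choose, w.2.choose_spec.1⟩ : F)
        = dist (z.2.choose : X) (w.2.choose : X) := by
      rw [Subtype.dist_eq, Subtype.dist_eq]
    rw [this, hval z, hval w, ← Subtype.dist_eq]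
  obtain ⟨ψ₀, hψ₀⟩ := hX F' hF'fin φ' hφ'iso
  -- the extension agrees with φ on F'
  -- lists
  set a : List X := hF'fin.toFinset.toList with ha
  set b : List X := a.map ψ₀ with hb
  have hmema : ∀ x, x ∈ a ↔ x ∈ F' := by
    intro x; rw [ha, Finset.mem_toList, Set.Finite.mem_toFinset]
  have hzipmem : ∀ x ∈ a, (x, ψ₀ x) ∈ a.zip b := by
    intro x hx
    have : a.zip b = a.map (fun x => (x, ψ₀ x)) := by
      conv_lhs => rw [show a = a.map id from (List.map_id a).symm]
      rw [hb, List.zip_map']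
      simp
    rw [this]
    exact List.mem_map.2 ⟨x, hx, rfl⟩
  have hex : ∃ g : X ≃ᵢ X, ∀ p ∈ a.zip b, g p.1 = p.2 := by
    refine ⟨ψ₀, ?_⟩
    intro p hp
    have : a.zip b = a.map (fun x => (x, ψ₀ x)) := by
      conv_lhs => rw [show a = a.map id from (List.map_id a).symm]
      rw [hb, List.zip_map']
      simp
    rw [this] at hp
    obtain ⟨x, _, rfl⟩ := List.mem_map.1 hp
    rfl
  set g : X ≃ᵢ X := extIso a b with hg
  have hgspec : ∀ x ∈ a, g x = ψ₀ x := fun x hx => extIso_spec a b hex _ (hzipmem x hx)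
  -- entries of a and b are in Y
  have haY : ∀ x ∈ a, x ∈ Y := by
    intro x hx
    obtain ⟨y, _, rfl⟩ := (hmema x).1 hx
    exact y.2
  have hψ₀Y : ∀ x (hx : x ∈ F'), ψ₀ x ∈ Y := by
    intro x hx
    have := hψ₀ ⟨x, hx⟩
    rw [this]
    exact (φ ⟨(hx).choose, (hx).choose_spec.1⟩ : Y).2
  have hbY : ∀ x ∈ b, x ∈ Y := by
    intro x hx
    obtain ⟨y, hy, rfl⟩ := List.mem_map.1 hx
    exact hψ₀Y y ((hmema y).1 hy)
  obtain ⟨n, hn⟩ := exists_stage D (a ++ b) (by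
    intro x hx
    rcases List.mem_append.1 hx with h | h
    · exact haY x h
    · exact hbY x h)
  have han : ∀ x ∈ a, x ∈ YS D n := fun x hx => hn x (List.mem_append.2 (Or.inl hx))
  have hbn : ∀ x ∈ b, x ∈ YS D n := fun x hx => hn x (List.mem_append.2 (Or.inr hx))
  -- g preserves Y
  have hgY : ∀ x ∈ Y, g x ∈ Y := fun x hx => (extIso_invariant D han hbn hx).1
  have hgY' : ∀ x ∈ Y, g.symm x ∈ Y := fun x hx => (extIso_invariant D han hbn hx).2
  -- build the isometry of Y
  refine ⟨⟨⟨fun y => ⟨g y, hgY y y.2⟩, fun y => ⟨g.symm y, hgY' y y.2⟩, ?_, ?_⟩, ?_⟩, ?_⟩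
  · intro y; ext; exact g.symm_apply_apply y
  · intro y; ext; exact g.apply_symm_apply y
  · apply Isometry.of_dist_eq
    intro y z
    rw [Subtype.dist_eq, Subtype.dist_eq]
    exact g.dist_eq y z
  · -- agreement with φ
    intro x
    ext
    show g (x : Y) = (φ x : X)
    have hxF' : ((x : Y) : X) ∈ F' := ⟨x.1, x.2, rfl⟩
    have h1 : g ((x : Y) : X) = ψ₀ ((x : Y) : X) := hgspec _ ((hmema _).2 hxF')
    rw [h1, hψ₀ ⟨_, hxF'⟩]
    show (φ ⟨hxF'.choose, hxF'.choose_spec.1⟩ : X) = _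
    have hch : hxF'.choose = (x : Y) := Subtype.ext (hval ⟨_, hxF'⟩)
    have h2 : (⟨hxF'.choose, hxF'.choose_spec.1⟩ : F) = x := Subtype.ext hch
    rw [h2]
end

section
/- Let m be a positive integer, let S be a Urysohn sphere, and let S_m be a countable ultrahomogeneous metric space with all distances in [0,1]_m into which every countable metric space with distances in [0,1]_m embeds isometrically. Then there exists an isometric embedding φ : S_m → S such that every point of S lies within distance 1/m of the image φ(S_m). -/
open Metric

noncomputable section StmtAux
namespace StmtAux

/-! ### distSetM helpers -/

lemma distSetM_nonneg {m : ℕ} {d : ℝ} (h : d ∈ distSetM m) : 0 ≤ d := by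
  obtain ⟨k, _, rfl⟩ := h; positivity

lemma distSetM_le_one {m : ℕ} (hm : 0 < m) {d : ℝ} (h : d ∈ distSetM m) : d ≤ 1 := by
  obtain ⟨k, hk, rfl⟩ := h
  rw [div_le_one (by exact_mod_cast hm)]
  exact_mod_cast hk

lemma zero_mem_distSetM (m : ℕ) : (0 : ℝ) ∈ distSetM m := ⟨0, Nat.zero_le _, by simp⟩

lemma min_one_add_mem {m : ℕ} (hm : 0 < m) {a b : ℝ} (ha : a ∈ distSetM m)
    (hb : b ∈ distSetM m) : min 1 (a + b) ∈ distSetM m := by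
  obtain ⟨k1, hk1, rfl⟩ := ha
  obtain ⟨k2, hk2, rfl⟩ := hb
  have hm' : (0:ℝ) < m := by exact_mod_cast hm
  rcases le_or_gt (k1 + k2) m with h | h
  · refine ⟨k1 + k2, h, ?_⟩
    rw [min_eq_right]
    · push_cast; ring
    · rw [← add_div, div_le_one hm']
      exact_mod_cast h
  · refine ⟨m, le_rfl, ?_⟩
    rw [div_self hm'.ne', min_eq_left]
    rw [← add_div, le_div_iff₀ hm', one_mul]
    exact_mod_cast h.le

/-! ### rounding to nearest multiple of 1/m -/

def rnd (m : ℕ) (a : ℝ) : ℝ := (⌊(m : ℝ) * a + 1/2⌋ : ℤ) / m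

variable {m : ℕ} {a b : ℝ}

lemma rnd_mem (hm : 0 < m) (h0 : 0 ≤ a) (h1 : a ≤ 1) : rnd m a ∈ distSetM m := by
  have hm' : (0:ℝ) < m := by exact_mod_cast hm
  have hfl0 : 0 ≤ ⌊(m : ℝ) * a + 1/2⌋ := Int.floor_nonneg.2 (by nlinarith)
  have hflm : ⌊(m : ℝ) * a + 1/2⌋ ≤ m := by
    have : ((⌊(m : ℝ) * a + 1/2⌋ : ℤ) : ℝ) ≤ (m:ℝ) * a + 1/2 := Int.floor_le _
    have : ((⌊(m : ℝ) * a + 1/2⌋ : ℤ) : ℝ) < (m:ℝ) + 1 := by nlinarith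
    exact_mod_cast Int.lt_add_one_iff.mp (by exact_mod_cast this)
  refine ⟨(⌊(m : ℝ) * a + 1/2⌋).toNat, ?_, ?_⟩
  · omega
  · rw [rnd]
    congr 1
    exact_mod_cast (Int.toNat_of_nonneg hfl0).symm

lemma abs_rnd_sub_le (hm : 0 < m) : |rnd m a - a| ≤ 1 / (2 * m) := by
  have hm' : (0:ℝ) < m := by exact_mod_cast hm
  have h1 : ((⌊(m : ℝ) * a + 1/2⌋ : ℤ) : ℝ) ≤ (m:ℝ) * a + 1/2 := Int.floor_le _
  have h2 : (m:ℝ) * a + 1/2 < ((⌊(m : ℝ) * a + 1/2⌋ : ℤ) : ℝ) + 1 := Int.lt_floor_add_one _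
  have e1 : rnd m a ≤ ((m:ℝ) * a + 1/2) / m := by
    rw [rnd]; gcongr
  have e2 : ((m:ℝ) * a + 1/2 - 1) / m ≤ rnd m a := by
    rw [rnd]; gcongr; linarith
  have e3 : ((m:ℝ) * a + 1/2) / m = a + 1/(2*m) := by field_simp
  have e4 : ((m:ℝ) * a + 1/2 - 1) / m = a - 1/(2*m) := by field_simp; ring
  rw [e3] at e1; rw [e4] at e2
  rw [abs_le]; constructor <;> linarith

lemma rnd_nonneg (hm : 0 < m) (h0 : 0 ≤ a) : 0 ≤ rnd m a := by
  have hm' : (0:ℝ) < m := by exact_mod_cast hm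
  apply div_nonneg _ hm'.le
  exact_mod_cast Int.floor_nonneg.2 (by nlinarith)

lemma rnd_add_nat (hm : 0 < m) (k : ℕ) : rnd m (a + k / m) = rnd m a + k / m := by
  have hm' : (0:ℝ) < m := by exact_mod_cast hm
  have : (m : ℝ) * (a + k / m) + 1/2 = ((m:ℝ) * a + 1/2) + (k : ℤ) := by
    push_cast; field_simp; ring
  rw [rnd, this, Int.floor_add_intCast]
  push_cast
  rw [add_div]
  rfl

lemma rnd_mono (hm : 0 < m) (h : a ≤ b) : rnd m a ≤ rnd m b := by
  have hm' : (0:ℝ) < m := by exact_mod_cast hm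
  rw [rnd, rnd]
  gcongr

lemma rnd_lip (hm : 0 < m) (k : ℕ) (h : |a - b| ≤ k / m) :
    |rnd m a - rnd m b| ≤ k / m := by
  rw [abs_le] at h ⊢
  constructor
  · have : b ≤ a + k / m := by linarith [h.1]
    have := (rnd_mono hm this).trans_eq (rnd_add_nat hm k)
    linarith
  · have : a ≤ b + k / m := by linarith [h.2]
    have := (rnd_mono hm this).trans_eq (rnd_add_nat hm k)
    linarith

lemma rnd_add_ge (hm : 0 < m) (k : ℕ) (h : (k : ℝ) / m ≤ a + b) :
    (k : ℝ) / m ≤ rnd m a + rnd m b := by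
  have hm' : (0:ℝ) < m := by exact_mod_cast hm
  have h2 : (m:ℝ) * a + 1/2 < ((⌊(m : ℝ) * a + 1/2⌋ : ℤ) : ℝ) + 1 := Int.lt_floor_add_one _
  have h3 : (m:ℝ) * b + 1/2 < ((⌊(m : ℝ) * b + 1/2⌋ : ℤ) : ℝ) + 1 := Int.lt_floor_add_one _
  have hk : (k : ℝ) ≤ (m:ℝ) * (a + b) := by
    rw [div_le_iff₀ hm'] at h; linarith
  have : ((k:ℤ) : ℝ) < ((⌊(m : ℝ) * a + 1/2⌋ + ⌊(m : ℝ) * b + 1/2⌋ + 1 : ℤ) : ℝ) := by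
    push_cast; nlinarith
  have hkk : (k:ℤ) ≤ ⌊(m : ℝ) * a + 1/2⌋ + ⌊(m : ℝ) * b + 1/2⌋ :=
    Int.lt_add_one_iff.mp (by exact_mod_cast this)
  rw [rnd, rnd, ← add_div, div_le_div_iff₀ hm' hm']
  have : ((k:ℤ):ℝ) ≤ ((⌊(m : ℝ) * a + 1/2⌋ + ⌊(m : ℝ) * b + 1/2⌋ : ℤ) : ℝ) := by exact_mod_cast hkk
  push_cast at this ⊢
  nlinarith

lemma rnd_near (hm : 0 < m) (k : ℕ) {e : ℝ} (h : |a - k / m| ≤ e) :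
    |rnd m a - a| ≤ e := by
  have hm' : (0:ℝ) < m := by exact_mod_cast hm
  rcases le_or_gt ((1:ℝ) / (2 * m)) e with h' | h'
  · exact (abs_rnd_sub_le hm).trans h'
  · have habs : |(m:ℝ) * a - k| ≤ (m:ℝ) * e := by
      have : (m:ℝ) * a - k = (m:ℝ) * (a - k / m) := by field_simp
      rw [this, abs_mul, abs_of_pos hm']
      exact mul_le_mul_of_nonneg_left h hm'.le
    have hme : (m:ℝ) * e < 1/2 := by
      have := mul_lt_mul_of_pos_left h' hm'
      have h2 : (m:ℝ) * (1/(2*m)) = 1/2 := by field_simp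
      linarith
    have : ⌊(m : ℝ) * a + 1/2⌋ = (k : ℤ) := by
      rw [Int.floor_eq_iff]
      rw [abs_le] at habs
      constructor
      · push_cast; nlinarith
      · push_cast; nlinarith
    have hr : rnd m a = (k : ℝ) / m := by rw [rnd, this]; push_cast; ring
    rw [hr, abs_sub_comm]
    exact h


def extDist {X : Type} [MetricSpace X] (g : X → ℝ) : Option X → Option X → ℝ
  | none, none => 0
  | none, some a => g a
  | some a, none => g a
  | some a, some b => dist a b

def extMetric {X : Type} [MetricSpace X] (g : X → ℝ) (hpos : ∀ x, 0 < g x)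
    (hlip : ∀ x y, g x ≤ g y + dist x y)
    (htri : ∀ x y, dist x y ≤ g x + g y) : MetricSpace (Option X) where
  dist := extDist g
  dist_self := by rintro (_ | a) <;> simp [extDist]
  dist_comm := by rintro (_ | a) (_ | b) <;> simp [extDist, dist_comm]
  dist_triangle := by
    rintro (_ | a) (_ | b) (_ | c) <;> simp only [extDist]
    · linarith
    · linarith [(hpos c).le]
    · linarith [(hpos b).le]
    · rw [dist_comm]; exact hlip c b
    · linarith
    · exact htri a c
    · linarith [hlip a b]
    · exact dist_triangle a b c
  eq_of_dist_eq_zero := by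
    rintro (_ | a) (_ | b) h <;> simp only [extDist] at h
    · rfl
    · exact absurd h (hpos b).ne'
    · exact absurd h (hpos a).ne'
    · rw [eq_of_dist_eq_zero h]

lemma ultra_extend {X : Type} [MetricSpace X] (hX : IsUltrahomogeneous X)
    {ι : Type} [Finite ι] (p : ι → X) (e : X → X) (he : Isometry e) (w0 : X) :
    ∃ w : X, ∀ i, dist w (p i) = dist w0 (e (p i)) := by
  obtain ⟨ψ, hψ⟩ := hX (Set.range p) (Set.finite_range p)
    (fun x => e x) (he.comp isometry_subtype_coe)
  refine ⟨ψ.symm w0, fun i => ?_⟩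
  have h1 : ψ (p i) = e (p i) := hψ ⟨p i, Set.mem_range_self i⟩
  calc dist (ψ.symm w0) (p i) = dist (ψ (ψ.symm w0)) (ψ (p i)) := (ψ.dist_eq _ _).symm
    _ = dist w0 (e (p i)) := by rw [ψ.apply_symm_apply, h1]

section Realize

variable {X : Type} [MetricSpace X] {ι : Type} [Fintype ι]

lemma g_props [Nonempty ι] (p : ι → X) (r : ι → ℝ)
    (hpos : ∀ i, 0 < r i) (h1 : ∀ i, r i ≤ 1) (hd1 : ∀ x y : X, dist x y ≤ 1)
    (htri1 : ∀ i j, dist (p i) (p j) ≤ r i + r j)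
    (htri2 : ∀ i j, r i ≤ r j + dist (p i) (p j)) :
    ∃ g : X → ℝ, (∀ x, 0 < g x) ∧ (∀ x y, g x ≤ g y + dist x y) ∧
      (∀ x y, dist x y ≤ g x + g y) ∧ (∀ x, g x ≤ 1) ∧ (∀ i, g (p i) = r i) ∧
      (∀ x, ∃ j, g x = min 1 (r j + dist x (p j))) := by
  have hne : (Finset.univ : Finset ι).Nonempty := Finset.univ_nonempty
  set I : X → ℝ := fun x => Finset.univ.inf' hne (fun i => r i + dist x (p i)) with hI
  set g : X → ℝ := fun x => min 1 (I x) with hg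
  have hIle : ∀ x i, I x ≤ r i + dist x (p i) := fun x i =>
    Finset.inf'_le _ (Finset.mem_univ i)
  have hIex : ∀ x, ∃ i, I x = r i + dist x (p i) := by
    intro x
    obtain ⟨i, _, hi⟩ := Finset.exists_mem_eq_inf' hne (fun i => r i + dist x (p i))
    exact ⟨i, hi⟩
  have hgex : ∀ x, ∃ j, g x = min 1 (r j + dist x (p j)) := by
    intro x; obtain ⟨i, hi⟩ := hIex x; exact ⟨i, by rw [hg]; simp only []; rw [hi]⟩
  have hgpos : ∀ x, 0 < g x := by
    intro x
    obtain ⟨i, hi⟩ := hIex x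
    apply lt_min one_pos
    rw [hi]
    have := dist_nonneg (x := x) (y := p i)
    linarith [hpos i]
  have hglip : ∀ x y, g x ≤ g y + dist x y := by
    intro x y
    obtain ⟨i, hi⟩ := hIex y
    have hIxy : I x ≤ I y + dist x y := by
      rw [hi]
      refine (hIle x i).trans ?_
      have := dist_triangle x y (p i)
      linarith
    have h1' : g x ≤ 1 := min_le_left _ _
    have h2' : g x ≤ I x := min_le_right _ _
    rcases le_total 1 (I y) with h | h
    · rw [hg]; simp only []
      rw [min_eq_left h]
      linarith [dist_nonneg (x := x) (y := y)]
    · rw [hg]; simp only []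
      rw [min_eq_right h]
      linarith
  have hgtri : ∀ x y, dist x y ≤ g x + g y := by
    intro x y
    rcases le_total 1 (I x) with h | h
    · have : g x = 1 := min_eq_left h
      rw [this]
      linarith [(hgpos y).le, hd1 x y]
    · rcases le_total 1 (I y) with h' | h'
      · have : g y = 1 := min_eq_left h'
        rw [this]
        linarith [(hgpos x).le, hd1 x y]
      · have hx : g x = I x := min_eq_right h
        have hy : g y = I y := min_eq_right h'
        obtain ⟨i, hi⟩ := hIex x
        obtain ⟨j, hj⟩ := hIex y
        rw [hx, hy, hi, hj]
        have t1 := dist_triangle x (p i) y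
        have t2 := dist_triangle (p i) (p j) y
        have t3 := htri1 i j
        have c1 := dist_comm (p j) y
        linarith
  have hgval : ∀ i, g (p i) = r i := by
    intro i
    have hIi : I (p i) = r i := by
      apply le_antisymm
      · have := hIle (p i) i; rwa [dist_self, add_zero] at this
      · apply Finset.le_inf'
        intro j _
        exact htri2 i j
    rw [hg]; simp only []
    rw [hIi, min_eq_right (h1 i)]
  exact ⟨g, hgpos, hglip, hgtri, fun x => min_le_left _ _, hgval, hgex⟩

lemma realize_degenerate (p : ι → X) (r : ι → ℝ)
    (htri1 : ∀ i j, dist (p i) (p j) ≤ r i + r j)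
    (htri2 : ∀ i j, r i ≤ r j + dist (p i) (p j))
    {i : ι} (hi : r i = 0) : ∀ j, dist (p i) (p j) = r j := by
  intro j
  apply le_antisymm
  · have := htri1 i j; rw [hi] at this; linarith
  · have := htri2 j i; rw [hi] at this
    rw [dist_comm] at this; linarith

lemma realize_S {S : Type} [MetricSpace S] (hS : IsUrysohnSphere S)
    (p : ι → S) (r : ι → ℝ)
    (h0 : ∀ i, 0 ≤ r i) (h1 : ∀ i, r i ≤ 1)
    (htri1 : ∀ i j, dist (p i) (p j) ≤ r i + r j)
    (htri2 : ∀ i j, r i ≤ r j + dist (p i) (p j)) :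
    ∃ w : S, ∀ i, dist w (p i) = r i := by
  obtain ⟨-, hsep, hultra, hdiam, huniv⟩ := hS
  have hne : Nonempty S := by
    obtain ⟨f, -⟩ := huniv PUnit inferInstance (fun a b => by
      rw [show dist a b = (0:ℝ) from rfl]; norm_num)
    exact ⟨f PUnit.unit⟩
  cases isEmpty_or_nonempty ι with
  | inl h => exact ⟨Classical.arbitrary S, fun i => (h.elim i)⟩
  | inr h =>
    by_cases hz : ∃ i, r i = 0
    · obtain ⟨i, hi⟩ := hz
      exact ⟨p i, realize_degenerate p r htri1 htri2 hi⟩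
    · push_neg at hz
      have hpos : ∀ i, 0 < r i := fun i => (h0 i).lt_of_ne (Ne.symm (hz i))
      obtain ⟨g, hgpos, hglip, hgtri, hgle1, hgval, hgex⟩ :=
        g_props p r hpos h1 hdiam htri1 htri2
      letI M := extMetric g hgpos hglip hgtri
      haveI hsepS : TopologicalSpace.SeparableSpace S := hsep
      haveI : TopologicalSpace.SeparableSpace (Option S) := by
        obtain ⟨C, hCc, hCd⟩ := TopologicalSpace.exists_countable_dense S
        refine ⟨⟨insert none (some '' C), (hCc.image _).insert _, ?_⟩⟩
        rw [Metric.dense_iff]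
        rintro (_ | x) ρ hρ
        · exact ⟨none, Metric.mem_ball_self hρ, Set.mem_insert _ _⟩
        · obtain ⟨y, hy⟩ := Metric.dense_iff.mp hCd x ρ hρ
          refine ⟨some y, ?_, Set.mem_insert_iff.mpr
            (Or.inr ⟨y, hy.2, rfl⟩)⟩
          have : dist (some y : Option S) (some x) = dist y x := rfl
          rw [Metric.mem_ball, this]
          exact hy.1
      obtain ⟨f, hf⟩ := huniv (Option S) inferInstance (by
        rintro (_ | a) (_ | b)
        · exact le_of_eq rfl |>.trans zero_le_one
        · exact hgle1 b
        · exact hgle1 a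
        · exact hdiam a b)
      have he : Isometry (fun x : S => f (some x)) :=
        Isometry.of_dist_eq fun a b => by
          rw [hf.dist_eq]
          rfl
      obtain ⟨w, hw⟩ := ultra_extend hultra p (fun x => f (some x)) he (f none)
      refine ⟨w, fun i => ?_⟩
      rw [hw i, hf.dist_eq]
      show extDist g none (some (p i)) = r i
      rw [show extDist g none (some (p i)) = g (p i) from rfl, hgval]

lemma realize_Sm {m : ℕ} (hm : 0 < m) {Sm : Type} [MetricSpace Sm]
    (hSm : IsUrysohnSphereM m Sm)
    (p : ι → Sm) (r : ι → ℝ)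
    (hmem : ∀ i, r i ∈ distSetM m)
    (htri1 : ∀ i j, dist (p i) (p j) ≤ r i + r j)
    (htri2 : ∀ i j, r i ≤ r j + dist (p i) (p j)) :
    ∃ w : Sm, ∀ i, dist w (p i) = r i := by
  obtain ⟨hcount, hultra, hdists, huniv⟩ := hSm
  have h0 : ∀ i, 0 ≤ r i := fun i => distSetM_nonneg (hmem i)
  have h1 : ∀ i, r i ≤ 1 := fun i => distSetM_le_one hm (hmem i)
  have hdiam : ∀ x y : Sm, dist x y ≤ 1 := fun x y => distSetM_le_one hm (hdists x y)
  have hne : Nonempty Sm := by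
    obtain ⟨f, -⟩ := huniv PUnit inferInstance (fun a b => by
      rw [show dist a b = (0:ℝ) from rfl]; exact zero_mem_distSetM m)
    exact ⟨f PUnit.unit⟩
  cases isEmpty_or_nonempty ι with
  | inl h => exact ⟨Classical.arbitrary Sm, fun i => (h.elim i)⟩
  | inr h =>
    by_cases hz : ∃ i, r i = 0
    · obtain ⟨i, hi⟩ := hz
      exact ⟨p i, realize_degenerate p r htri1 htri2 hi⟩
    · push_neg at hz
      have hpos : ∀ i, 0 < r i := fun i => (h0 i).lt_of_ne (Ne.symm (hz i))
      obtain ⟨g, hgpos, hglip, hgtri, hgle1, hgval, hgex⟩ :=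
        g_props p r hpos h1 hdiam htri1 htri2
      letI M := extMetric g hgpos hglip hgtri
      obtain ⟨f, hf⟩ := huniv (Option Sm) inferInstance (by
        rintro (_ | a) (_ | b)
        · exact zero_mem_distSetM m
        · show g b ∈ distSetM m
          obtain ⟨j, hj⟩ := hgex b
          rw [hj]
          exact min_one_add_mem hm (hmem j) (hdists b (p j))
        · show g a ∈ distSetM m
          obtain ⟨j, hj⟩ := hgex a
          rw [hj]
          exact min_one_add_mem hm (hmem j) (hdists a (p j))
        · exact hdists a b)
      have he : Isometry (fun x : Sm => f (some x)) :=
        Isometry.of_dist_eq fun a b => by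
          rw [hf.dist_eq]
          rfl
      obtain ⟨w, hw⟩ := ultra_extend hultra p (fun x => f (some x)) he (f none)
      refine ⟨w, fun i => ?_⟩
      rw [hw i, hf.dist_eq]
      show extDist g none (some (p i)) = r i
      rw [show extDist g none (some (p i)) = g (p i) from rfl, hgval]

end Realize


def GoodSeq (m : ℕ) {Sm S : Type} [MetricSpace Sm] [MetricSpace S]
    (u : ℕ → Sm) (dS : ℕ → S) (n : ℕ) (f : ℕ → Sm × S) : Prop :=
  (∀ i ≤ n, ∀ j ≤ n, dist (f i).1 (f j).1 = dist (f i).2 (f j).2) ∧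
  (∀ k, 2*k ≤ n → (f (2*k)).1 = u k) ∧
  (∀ k, 2*k+1 ≤ n → dist (dS k) ((f (2*k+1)).2) ≤ 1/(2*(m:ℝ)))

end StmtAux
end StmtAux

/-- There is an isometric copy of `S_m` inside `S` which is `1/m`-dense. -/
theorem stmt3 (m : ℕ) (hm : 0 < m)
    (S : Type) [MetricSpace S] (hS : IsUrysohnSphere S)
    (Sm : Type) [MetricSpace Sm] (hSm : IsUrysohnSphereM m Sm) :
    ∃ φ : Sm → S, Isometry φ ∧ ∀ s : S, ∃ x : Sm, dist s (φ x) ≤ 1/(m:ℝ) := by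
  classical
  open StmtAux in
  obtain ⟨-, hSsep, -, hSdiam, -⟩ := id hS
  obtain ⟨hSmcount, -, hSmdists, -⟩ := id hSm
  have hm' : (0:ℝ) < m := by exact_mod_cast hm
  -- nonemptiness
  have hneS : Nonempty S := by
    obtain ⟨w, -⟩ := StmtAux.realize_S (ι := Fin 0) hS (fun i => i.elim0) (fun i => i.elim0)
      (fun i => i.elim0) (fun i => i.elim0) (fun i => i.elim0) (fun i => i.elim0)
    exact ⟨w⟩
  have hneSm : Nonempty Sm := by
    obtain ⟨w, -⟩ := StmtAux.realize_Sm (ι := Fin 0) hm hSm (fun i => i.elim0) (fun i => i.elim0)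
      (fun i => i.elim0) (fun i => i.elim0) (fun i => i.elim0)
    exact ⟨w⟩
  haveI := hneS; haveI := hneSm; haveI := hSmcount
  haveI : TopologicalSpace.SeparableSpace S := hSsep
  obtain ⟨u, hu⟩ := exists_surjective_nat Sm
  let dS : ℕ → S := TopologicalSpace.denseSeq S
  have hdS : DenseRange dS := TopologicalSpace.denseRange_denseSeq S
  -- the inductive step
  have hstep : ∀ (n : ℕ) (f : ℕ → Sm × S), StmtAux.GoodSeq m u dS n f →
      ∃ f' : ℕ → Sm × S, (∀ i ≤ n, f' i = f i) ∧ StmtAux.GoodSeq m u dS (n+1) f' := by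
    intro n f hQn
    obtain ⟨hQ1, hQ2, hQ3⟩ := hQn
    have heqd : ∀ i j : Fin (n+1), dist ((f i).2) ((f j).2) = dist ((f i).1) ((f j).1) :=
      fun i j => (hQ1 i i.is_le j j.is_le).symm
    rcases Nat.even_or_odd (n+1) with he | ho
    · -- even step : map the next point of Sm
      obtain ⟨k, hk⟩ := he
      obtain ⟨w, hw⟩ := StmtAux.realize_S hS (fun i : Fin (n+1) => (f i).2)
        (fun i => dist (u k) ((f i).1))
        (fun i => dist_nonneg)
        (fun i => StmtAux.distSetM_le_one hm (hSmdists _ _))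
        (by
          intro i j
          rw [heqd i j]
          exact dist_triangle_left _ _ _)
        (by
          intro i j
          rw [heqd i j]
          have h4 := dist_triangle (u k) ((f j).1) ((f i).1)
          rw [dist_comm ((f (j:ℕ)).1) ((f (i:ℕ)).1)] at h4
          exact h4)
      refine ⟨Function.update f (n+1) (u k, w), ?_, ?_, ?_, ?_⟩
      · intro i hi
        exact Function.update_of_ne (by omega) _ f
      · intro i hi j hj
        rcases Nat.lt_succ_iff_lt_or_eq.mp (Nat.lt_succ_of_le hi) with hi' | hi' <;>
          rcases Nat.lt_succ_iff_lt_or_eq.mp (Nat.lt_succ_of_le hj) with hj' | hj'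
        · rw [Function.update_of_ne (by omega), Function.update_of_ne (by omega)]
          exact hQ1 i (by omega) j (by omega)
        · subst hj'
          rw [Function.update_of_ne (show i ≠ n+1 from by omega) _ f, Function.update_self]
          have := hw ⟨i, by omega⟩
          simp only at this
          calc dist (f i).1 (u k) = dist (u k) ((f i).1) := dist_comm _ _
            _ = dist w ((f i).2) := this.symm
            _ = dist (f i).2 w := dist_comm _ _
        · subst hi'
          rw [Function.update_of_ne (show j ≠ n+1 from by omega) _ f, Function.update_self]
          have := hw ⟨j, by omega⟩
          simp only at this
          exact this.symm
        · subst hi'; subst hj'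
          rw [dist_self, dist_self]
      · intro k' hk'
        by_cases h2 : 2*k' = n+1
        · have : k' = k := by omega
          subst this
          rw [h2, Function.update_self]
        · rw [Function.update_of_ne (by omega)]
          exact hQ2 k' (by omega)
      · intro k' hk'
        have : 2*k'+1 ≠ n+1 := by omega
        rw [Function.update_of_ne (by omega)]
        exact hQ3 k' (by omega)
    · -- odd step : capture the next point of the dense sequence
      obtain ⟨k, hk⟩ := ho
      have hFne : (Finset.univ : Finset (Fin (n+1))).Nonempty := Finset.univ_nonempty
      set a : Fin (n+1) → ℝ := fun i => dist (dS k) ((f i).2) with ha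
      set ρ : Fin (n+1) → ℝ := fun i => StmtAux.rnd m (a i) with hρ
      set c : ℝ := Finset.univ.sup' hFne (fun i => |ρ i - a i|) with hc
      have hcge : ∀ i, |ρ i - a i| ≤ c := by
        intro i
        rw [hc]
        exact Finset.le_sup' (fun i => |ρ i - a i|) (Finset.mem_univ i)
      have hcle : c ≤ 1/(2*(m:ℝ)) := by
        rw [hc]
        exact Finset.sup'_le _ _ (fun i _ => StmtAux.abs_rnd_sub_le hm)
      have hc0 : 0 ≤ c := (abs_nonneg _).trans (hcge ⟨0, Nat.succ_pos n⟩)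
      have hρmem : ∀ i, ρ i ∈ distSetM m :=
        fun i => StmtAux.rnd_mem hm dist_nonneg (hSdiam _ _)
      have hρ0 : ∀ i, 0 ≤ ρ i := fun i => StmtAux.distSetM_nonneg (hρmem i)
      have htri1' : ∀ i j : Fin (n+1), dist ((f i).1) ((f j).1) ≤ ρ i + ρ j := by
        intro i j
        obtain ⟨kk, hkk, hdd⟩ := hSmdists ((f i).1) ((f j).1)
        rw [hdd]
        apply StmtAux.rnd_add_ge hm
        rw [← hdd, ← heqd i j]
        exact dist_triangle_left _ _ _
      have htri2' : ∀ i j : Fin (n+1), ρ i ≤ ρ j + dist ((f i).1) ((f j).1) := by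
        intro i j
        obtain ⟨kk, hkk, hdd⟩ := hSmdists ((f i).1) ((f j).1)
        have habs : |a i - a j| ≤ (kk:ℝ)/m := by
          rw [← hdd, ← heqd i j, ha]
          simp only
          rw [dist_comm (dS k) ((f i).2), dist_comm (dS k) ((f j).2)]
          exact abs_dist_sub_le _ _ _
        have h2 := abs_le.mp (StmtAux.rnd_lip hm kk habs)
        rw [hdd]
        linarith [h2.2]
      obtain ⟨t', ht'⟩ := StmtAux.realize_Sm hm hSm (fun i : Fin (n+1) => (f i).1) ρ
        hρmem htri1' htri2'
      -- now realize the image point in S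
      obtain ⟨w, hw⟩ := StmtAux.realize_S hS
        (fun o : Option (Fin (n+1)) => Option.elim o (dS k) (fun i => (f i).2))
        (fun o => Option.elim o c ρ)
        (by rintro (_ | i)
            · exact hc0
            · exact hρ0 i)
        (by rintro (_ | i)
            · refine hcle.trans ?_
              rw [div_le_one (by positivity)]
              have h1m : (1:ℝ) ≤ m := by exact_mod_cast hm
              linarith
            · exact StmtAux.distSetM_le_one hm (hρmem i))
        (by
          rintro (_ | i) (_ | j)
          · simp only [Option.elim]
            rw [dist_self]; linarith
          · simp only [Option.elim]
            have h1 := neg_le_abs (ρ j - a j)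
            have h2 := hcge j
            have : dist (dS k) ((f j).2) = a j := rfl
            rw [this]; linarith
          · simp only [Option.elim]
            have h1 := neg_le_abs (ρ i - a i)
            have h2 := hcge i
            have : dist ((f i).2) (dS k) = a i := by rw [dist_comm]
            rw [this]; linarith
          · simp only [Option.elim]
            rw [heqd i j]
            exact htri1' i j)
        (by
          rintro (_ | i) (_ | j)
          · simp only [Option.elim]
            rw [dist_self]; linarith
          · -- c ≤ ρ j + dist (dS k) (f j).2
            simp only [Option.elim]
            obtain ⟨i0, -, hi0⟩ := Finset.exists_mem_eq_sup' hFne (fun i => |ρ i - a i|)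
            obtain ⟨kk, hkk, hdd⟩ := hSmdists ((f j).1) ((f i0).1)
            have hD : dist ((f j).2) ((f i0).2) = (kk:ℝ)/m := by rw [heqd j i0, hdd]
            have habs : |a i0 - (kk:ℝ)/m| ≤ a j := by
              rw [← hD]
              exact abs_dist_sub_le (dS k) ((f j).2) ((f i0).2)
            have h3 := StmtAux.rnd_near hm kk habs
            have hcval : c = |ρ i0 - a i0| := by rw [hc]; exact hi0
            have : dist (dS k) ((f j).2) = a j := rfl
            rw [this, hcval]
            linarith [hρ0 j]
          · -- ρ i ≤ c + dist (f i).2 (dS k)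
            simp only [Option.elim]
            have h1 := le_abs_self (ρ i - a i)
            have h2 := hcge i
            have : dist ((f i).2) (dS k) = a i := by rw [dist_comm]
            rw [this]; linarith
          · simp only [Option.elim]
            rw [heqd i j]
            exact htri2' i j)
      refine ⟨Function.update f (n+1) (t', w), ?_, ?_, ?_, ?_⟩
      · intro i hi
        exact Function.update_of_ne (by omega) _ f
      · intro i hi j hj
        rcases Nat.lt_succ_iff_lt_or_eq.mp (Nat.lt_succ_of_le hi) with hi' | hi' <;>
          rcases Nat.lt_succ_iff_lt_or_eq.mp (Nat.lt_succ_of_le hj) with hj' | hj'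
        · rw [Function.update_of_ne (by omega), Function.update_of_ne (by omega)]
          exact hQ1 i (by omega) j (by omega)
        · subst hj'
          rw [Function.update_of_ne (show i ≠ n+1 from by omega) _ f, Function.update_self]
          have h1 := ht' ⟨i, by omega⟩
          have h2 := hw (some ⟨i, by omega⟩)
          simp only [Option.elim] at h2
          simp only at h1
          calc dist (f i).1 t' = dist t' ((f i).1) := dist_comm _ _
            _ = ρ ⟨i, by omega⟩ := h1
            _ = dist w ((f i).2) := h2.symm
            _ = dist (f i).2 w := dist_comm _ _
        · subst hi'
          rw [Function.update_of_ne (show j ≠ n+1 from by omega) _ f, Function.update_self]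
          have h1 := ht' ⟨j, by omega⟩
          have h2 := hw (some ⟨j, by omega⟩)
          simp only [Option.elim] at h2
          simp only at h1
          calc dist t' ((f j).1) = ρ ⟨j, by omega⟩ := h1
            _ = dist w ((f j).2) := h2.symm
        · subst hi'; subst hj'
          rw [dist_self, dist_self]
      · intro k' hk'
        have : 2*k' ≠ n+1 := by omega
        rw [Function.update_of_ne (by omega)]
        exact hQ2 k' (by omega)
      · intro k' hk'
        by_cases h2 : 2*k'+1 = n+1
        · have hkk' : k' = k := by omega
          subst hkk'
          rw [h2, Function.update_self]
          have h3 := hw none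
          simp only [Option.elim] at h3
          calc dist (dS k') w = dist w (dS k') := dist_comm _ _
            _ = c := h3
            _ ≤ 1/(2*(m:ℝ)) := hcle
        · rw [Function.update_of_ne (by omega)]
          exact hQ3 k' (by omega)
  -- base case
  have hbase : StmtAux.GoodSeq m u dS 0 (fun _ => (u 0, Classical.arbitrary S)) := by
    refine ⟨?_, ?_, ?_⟩
    · intro i hi j hj
      interval_cases i
      interval_cases j
      rw [dist_self, dist_self]
    · intro k hk
      have : k = 0 := by omega
      subst this; rfl
    · intro k hk; omega
  -- build the chain
  let f0 : ℕ → Sm × S := fun _ => (u 0, Classical.arbitrary S)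
  let step : ℕ → (ℕ → Sm × S) → (ℕ → Sm × S) := fun k fk =>
    if h : StmtAux.GoodSeq m u dS k fk then (hstep k fk h).choose else fk
  let F : ℕ → ℕ → Sm × S := fun n => Nat.rec f0 step n
  have hFs : ∀ n, F (n+1) = step n (F n) := fun n => rfl
  have hQ : ∀ n, StmtAux.GoodSeq m u dS n (F n) := by
    intro n
    induction n with
    | zero => exact hbase
    | succ n ih =>
      rw [hFs n]
      show StmtAux.GoodSeq m u dS (n+1) (step n (F n))
      have : step n (F n) = (hstep n (F n) ih).choose := dif_pos ih
      rw [this]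
      exact (hstep n (F n) ih).choose_spec.2
  have hAg : ∀ n, ∀ i ≤ n, F (n+1) i = F n i := by
    intro n i hi
    rw [hFs n]
    have h1 : step n (F n) = (hstep n (F n) (hQ n)).choose := dif_pos (hQ n)
    rw [h1]
    exact (hstep n (F n) (hQ n)).choose_spec.1 i hi
  have hAg2 : ∀ i n, i ≤ n → F n i = F i i := by
    intro i n
    induction n with
    | zero => intro h; have : i = 0 := by omega
              subst this; rfl
    | succ n ih =>
      intro h
      rcases Nat.lt_succ_iff_lt_or_eq.mp (Nat.lt_succ_of_le h) with h' | h'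
      · rw [hAg n i (by omega), ih (by omega)]
      · subst h'; rfl
  let gs : ℕ → Sm × S := fun i => F i i
  have G1 : ∀ i j, dist (gs i).1 (gs j).1 = dist (gs i).2 (gs j).2 := by
    intro i j
    have h := (hQ (max i j)).1 i (le_max_left _ _) j (le_max_right _ _)
    rwa [hAg2 i _ (le_max_left _ _), hAg2 j _ (le_max_right _ _)] at h
  have G2 : ∀ k, (gs (2*k)).1 = u k := fun k => (hQ (2*k)).2.1 k le_rfl
  have G3 : ∀ k, dist (dS k) ((gs (2*k+1)).2) ≤ 1/(2*(m:ℝ)) :=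
    fun k => (hQ (2*k+1)).2.2 k le_rfl
  have hsurj : ∀ x : Sm, ∃ i, (gs i).1 = x := by
    intro x
    obtain ⟨k, hk⟩ := hu x
    exact ⟨2*k, by rw [G2]; exact hk⟩
  let σ : Sm → ℕ := fun x => (hsurj x).choose
  have hσ : ∀ x, (gs (σ x)).1 = x := fun x => (hsurj x).choose_spec
  refine ⟨fun x => (gs (σ x)).2, ?_, ?_⟩
  · apply Isometry.of_dist_eq
    intro x y
    rw [← G1, hσ, hσ]
  · intro s
    obtain ⟨k, hk⟩ := Metric.denseRange_iff.mp hdS s (1/(2*(m:ℝ))) (by positivity)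
    set x : Sm := (gs (2*k+1)).1 with hx
    have hφx : (gs (σ x)).2 = (gs (2*k+1)).2 := by
      have h0' : dist ((gs (σ x)).1) ((gs (2*k+1)).1) = 0 := by
        rw [hσ x]
        exact dist_self _
      have := G1 (σ x) (2*k+1)
      rw [h0'] at this
      exact eq_of_dist_eq_zero this.symm
    refine ⟨x, ?_⟩
    show dist s ((gs (σ x)).2) ≤ 1/(m:ℝ)
    rw [hφx]
    calc dist s ((gs (2*k+1)).2) ≤ dist s (dS k) + dist (dS k) ((gs (2*k+1)).2) :=
          dist_triangle _ _ _
      _ ≤ 1/(2*(m:ℝ)) + 1/(2*(m:ℝ)) := add_le_add hk.le (G3 k)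
      _ = 1/(m:ℝ) := by
          rw [← two_mul, mul_one_div, div_mul_eq_div_div]
          norm_num
end

section
/- Let m be a positive integer, let M be a metric space, let X ⊆ M be a finite nonempty subset all of whose pairwise distances are integer multiples of 1/m, and let y ∈ M with y ∉ X. Define f on X ∪ {y} by f(x) = ⌈d(x,y)⌉_m for x ∈ X and f(y) = max{ ⌈d(x,y)⌉_m − d(x,y) : x ∈ X }. Then f satisfies the Katětov inequalities on X ∪ {y}: for all a, b ∈ X ∪ {y}, |f(a) − f(b)| ≤ d(a,b) ≤ f(a) + f(b). -/
open Metric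

/-- The Katětov map claim: if `X` has pairwise distances which are integer
multiples of `1/m` and `y ∉ X`, then the map `f` defined by
`f x = ⌈d(x,y)⌉_m` on `X` and `f y = max {⌈d(x,y)⌉_m - d(x,y) : x ∈ X}`
satisfies the Katětov inequalities on `X ∪ {y}`. -/
theorem stmt4 (m : ℕ) (hm : 0 < m) (M : Type*) [MetricSpace M]
    (X : Set M) (hXfin : X.Finite) (hXne : X.Nonempty)
    (hdist : ∀ x ∈ X, ∀ x' ∈ X, ∃ k : ℤ, dist x x' = (k : ℝ) / m)
    (y : M) (hy : y ∉ X)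
    (f : M → ℝ)
    (hfX : ∀ x ∈ X, f x = (⌈(m : ℝ) * dist x y⌉ : ℝ) / m)
    (hfy₁ : ∃ x ∈ X, f y = (⌈(m : ℝ) * dist x y⌉ : ℝ) / m - dist x y)
    (hfy₂ : ∀ x ∈ X, (⌈(m : ℝ) * dist x y⌉ : ℝ) / m - dist x y ≤ f y) :
    ∀ a ∈ X ∪ {y}, ∀ b ∈ X ∪ {y},
      |f a - f b| ≤ dist a b ∧ dist a b ≤ f a + f b := by
  have hm' : (0 : ℝ) < m := by exact_mod_cast hm
  -- f x ≥ dist x y on X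
  have hge : ∀ x ∈ X, dist x y ≤ f x := by
    intro x hx
    rw [hfX x hx, le_div_iff₀ hm']
    calc dist x y * m = (m : ℝ) * dist x y := mul_comm _ _
      _ ≤ (⌈(m : ℝ) * dist x y⌉ : ℝ) := Int.le_ceil _
  obtain ⟨x₀, hx₀, hfy⟩ := hfy₁
  have hfy0 : 0 ≤ f y := by
    have h1 := hge x₀ hx₀
    have h2 := hfy₂ x₀ hx₀
    rw [hfX x₀ hx₀] at h1
    linarith
  -- Katětov difference inequality within X
  have hXX : ∀ a ∈ X, ∀ b ∈ X, f a - f b ≤ dist a b := by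
    intro a ha b hb
    obtain ⟨k, hk⟩ := hdist a ha b hb
    have hk' : (m : ℝ) * dist a b = k := by rw [hk]; field_simp
    have hceil : (⌈(m : ℝ) * dist a y⌉ : ℤ) ≤ ⌈(m : ℝ) * dist b y⌉ + k := by
      apply Int.ceil_le.mpr
      push_cast
      have h1 := Int.le_ceil ((m : ℝ) * dist b y)
      have h2 := mul_le_mul_of_nonneg_left (dist_triangle a b y) hm'.le
      rw [mul_add, hk'] at h2
      linarith
    have hceil' : ((⌈(m : ℝ) * dist a y⌉ : ℝ)) ≤ (⌈(m : ℝ) * dist b y⌉ : ℝ) + k := by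
      exact_mod_cast hceil
    rw [hfX a ha, hfX b hb, hk, ← sub_div]
    gcongr
    linarith
  have hXy : ∀ a ∈ X, |f a - f y| ≤ dist a y ∧ dist a y ≤ f a + f y := by
    intro a ha
    have h1 : f a - dist a y ≤ f y := by
      have := hfy₂ a ha; rw [hfX a ha]; linarith [hfy₂ a ha]
    have h2 : f y - f a ≤ dist a y := by
      have h3 := hXX x₀ hx₀ a ha
      have h4 := dist_triangle x₀ y a
      rw [dist_comm y a] at h4
      linarith [hfy, (hfX x₀ hx₀) ▸ hfy]
    constructor
    · rw [abs_sub_le_iff]; exact ⟨by linarith, h2⟩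
    · linarith [hge a ha]
  intro a ha b hb
  rcases ha with ha | ha <;> rcases hb with hb | hb
  · refine ⟨abs_sub_le_iff.mpr ⟨hXX a ha b hb, ?_⟩, ?_⟩
    · rw [dist_comm a b] at *; exact hXX b hb a ha
    · have := dist_triangle a y b
      rw [dist_comm y b] at this
      linarith [hge a ha, hge b hb]
  · rcases hb with rfl; exact hXy a ha
  · rcases ha with rfl
    obtain ⟨h1, h2⟩ := hXy b hb
    rw [dist_comm]
    exact ⟨by rw [abs_sub_comm]; exact h1, by linarith⟩
  · rcases ha with rfl; rcases hb with rfl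
    exact ⟨by simp, by simp only [dist_self]; linarith⟩
end

section
/- Let S be a Urysohn sphere and let A and B be two subsets of S, each isometric to the rational Urysohn sphere S_Q, with A dense in S. Then for every ε > 0, the set A ∩ (B)_ε contains a subset isometric to S_Q. -/
open Metric

-- auxiliary part to be inserted before stmt5
section Stmt5Aux

open Classical in
/-- distance on `Option Z` adding one new point `none` with prescribed distances `f`. -/
def optDist {Z : Type} [MetricSpace Z] (f : Z → ℝ) : Option Z → Option Z → ℝ
  | some x, some y => dist x y
  | some x, none => f x
  | none, some y => f y
  | none, none => 0

def optMetric {Z : Type} [MetricSpace Z] (f : Z → ℝ) (hpos : ∀ x, 0 < f x)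
    (hK1 : ∀ x y, |f x - f y| ≤ dist x y) (hK2 : ∀ x y, dist x y ≤ f x + f y) :
    MetricSpace (Option Z) where
  dist := optDist f
  dist_self := by rintro (_ | x) <;> simp [optDist]
  dist_comm := by rintro (_ | x) (_ | y) <;> simp [optDist, dist_comm]
  dist_triangle := by
    rintro (_ | x) (_ | y) (_ | z) <;> simp only [optDist]
    · norm_num
    · have := hpos z; linarith
    · have := hpos y; linarith
    · have h := hK1 y z
      have h2 := abs_le.1 h
      linarith [h2.1]
    · norm_num
    · exact hK2 x z
    · have h := hK1 x y
      have h2 := abs_le.1 h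
      linarith [h2.2, dist_comm x y]
    · exact dist_triangle x y z
  eq_of_dist_eq_zero := by
    rintro (_ | x) (_ | y) h
    · rfl
    · exact absurd h.symm (ne_of_lt (hpos y))
    · exact absurd h.symm (ne_of_lt (hpos x))
    · exact congrArg some (eq_of_dist_eq_zero h)

theorem ultra_extend {T : Type} [MetricSpace T] (hT : IsUltrahomogeneous T)
    {W : Type} [MetricSpace W] [Finite W] (p : W) (j : W → T) (hj : Isometry j)
    (g : W → T) (hg : ∀ z w : W, z ≠ p → w ≠ p → dist (g z) (g w) = dist z w) :
    ∃ s : T, ∀ z : W, z ≠ p → dist s (g z) = dist p z := by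
  classical
  set F : Set T := j '' {w | w ≠ p} with hF
  have hFfin : F.Finite := Set.Finite.image _ (Set.toFinite _)
  have hmem : ∀ y : F, ∃ w, w ≠ p ∧ j w = (y : T) := by
    rintro ⟨y, ⟨w, hw, hjw⟩⟩
    exact ⟨w, hw, hjw⟩
  choose wit hwit1 hwit2 using hmem
  have hiso : Isometry (fun y : F => g (wit y)) := by
    apply Isometry.of_dist_eq
    intro y₁ y₂
    rw [hg _ _ (hwit1 y₁) (hwit1 y₂), ← hj.dist_eq, hwit2 y₁, hwit2 y₂, Subtype.dist_eq]
  obtain ⟨ψ, hψ⟩ := hT F hFfin _ hiso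
  refine ⟨ψ (j p), fun z hz => ?_⟩
  have hzF : j z ∈ F := ⟨z, hz, rfl⟩
  have h1 : ψ (j z) = g (wit ⟨j z, hzF⟩) := hψ ⟨j z, hzF⟩
  have h2 : wit ⟨j z, hzF⟩ = z := hj.injective (hwit2 ⟨j z, hzF⟩)
  rw [h2] at h1
  rw [← h1, ψ.isometry.dist_eq, hj.dist_eq]

theorem realize_S {S : Type} [MetricSpace S] (hS : IsUrysohnSphere S)
    (F : Finset S) (f : S → ℝ)
    (hpos : ∀ x ∈ F, 0 < f x) (hle1 : ∀ x ∈ F, f x ≤ 1)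
    (hK1 : ∀ x ∈ F, ∀ y ∈ F, |f x - f y| ≤ dist x y)
    (hK2 : ∀ x ∈ F, ∀ y ∈ F, dist x y ≤ f x + f y) :
    ∃ s : S, ∀ x ∈ F, dist s x = f x := by
  classical
  letI M : MetricSpace (Option ↥F) :=
    optMetric (fun x => f x.1) (fun x => hpos x.1 x.2)
      (fun x y => hK1 x.1 x.2 y.1 y.2) (fun x y => hK2 x.1 x.2 y.1 y.2)
  have hdist1 : ∀ a b : Option ↥F, dist a b ≤ 1 := by
    rintro (_ | x) (_ | y)
    · show (0:ℝ) ≤ 1; norm_num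
    · exact hle1 y.1 y.2
    · exact hle1 x.1 x.2
    · exact hS.2.2.2.1 x.1 y.1
  obtain ⟨j, hj⟩ := hS.2.2.2.2 (Option ↥F) inferInstance hdist1
  have hg : ∀ z w : Option ↥F, z ≠ none → w ≠ none →
      dist ((fun o : Option ↥F => o.elim (j none) Subtype.val) z)
        ((fun o : Option ↥F => o.elim (j none) Subtype.val) w) = dist z w := by
    rintro (_ | x) (_ | y) hz hw
    · exact absurd rfl hz
    · exact absurd rfl hz
    · exact absurd rfl hw
    · rfl
  obtain ⟨s, hs⟩ := ultra_extend hS.2.2.1 (none : Option ↥F) j hj _ hg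
  refine ⟨s, fun x hx => ?_⟩
  exact hs (some ⟨x, hx⟩) (by simp)

theorem realize_Q {SQ : Type} [MetricSpace SQ] (hSQ : IsRationalUrysohnSphere SQ)
    (F : Finset SQ) (f : SQ → ℝ)
    (hpos : ∀ x ∈ F, 0 < f x)
    (hrat : ∀ x ∈ F, ∃ q : ℚ, 0 ≤ q ∧ q ≤ 1 ∧ f x = q)
    (hK1 : ∀ x ∈ F, ∀ y ∈ F, |f x - f y| ≤ dist x y)
    (hK2 : ∀ x ∈ F, ∀ y ∈ F, dist x y ≤ f x + f y) :
    ∃ s : SQ, ∀ x ∈ F, dist s x = f x := by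
  classical
  letI M : MetricSpace (Option ↥F) :=
    optMetric (fun x => f x.1) (fun x => hpos x.1 x.2)
      (fun x y => hK1 x.1 x.2 y.1 y.2) (fun x y => hK2 x.1 x.2 y.1 y.2)
  have hdrat : ∀ a b : Option ↥F, ∃ q : ℚ, 0 ≤ q ∧ q ≤ 1 ∧ dist a b = q := by
    rintro (_ | x) (_ | y)
    · exact ⟨0, le_rfl, zero_le_one, by norm_num⟩
    · exact hrat y.1 y.2
    · exact hrat x.1 x.2
    · exact hSQ.2.2.1 x.1 y.1
  obtain ⟨j, hj⟩ := hSQ.2.2.2 (Option ↥F) inferInstance hdrat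
  have hg : ∀ z w : Option ↥F, z ≠ none → w ≠ none →
      dist ((fun o : Option ↥F => o.elim (j none) Subtype.val) z)
        ((fun o : Option ↥F => o.elim (j none) Subtype.val) w) = dist z w := by
    rintro (_ | x) (_ | y) hz hw
    · exact absurd rfl hz
    · exact absurd rfl hz
    · exact absurd rfl hw
    · rfl
  obtain ⟨s, hs⟩ := ultra_extend hSQ.2.1 (none : Option ↥F) j hj _ hg
  refine ⟨s, fun x hx => ?_⟩
  exact hs (some ⟨x, hx⟩) (by simp)

end Stmt5Aux

/-- If `A, B ⊆ S` are copies of `S_ℚ` with `A` dense in `S`, then for every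
`ε > 0`, `A ∩ (B)_ε` contains a copy of `S_ℚ`. -/
theorem stmt5 (S : Type) [MetricSpace S] (hS : IsUrysohnSphere S)
    (SQ : Type) [MetricSpace SQ] (hSQ : IsRationalUrysohnSphere SQ)
    (A B : Set S)
    (hA : ∃ e : SQ → S, Isometry e ∧ Set.range e = A)
    (hB : ∃ e : SQ → S, Isometry e ∧ Set.range e = B)
    (hAdense : Dense A) :
    ∀ ε : ℝ, 0 < ε →
      ∃ C ⊆ A ∩ {x : S | ∃ b ∈ B, dist x b ≤ ε},
        ∃ e : SQ → S, Isometry e ∧ Set.range e = C := by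
  classical
  obtain ⟨eA, hisoA, hranA⟩ := hA
  obtain ⟨eB, hisoB, hranB⟩ := hB
  intro ε hε
  have hSQrat := hSQ.2.2.1
  have hSQ1 : ∀ a b : SQ, dist a b ≤ 1 := by
    intro a b; obtain ⟨q, _, hq1, hqe⟩ := hSQrat a b
    rw [hqe]; exact_mod_cast hq1
  haveI hcnt : Countable SQ := hSQ.1
  haveI hSQne : Nonempty SQ := by
    obtain ⟨f, -⟩ := hSQ.2.2.2 PUnit inferInstance
      (fun a b => ⟨0, le_rfl, zero_le_one, by rw [Subsingleton.elim a b, dist_self]; norm_num⟩)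
    exact ⟨f PUnit.unit⟩
  obtain ⟨u, hu⟩ := exists_surjective_nat SQ
  set η := min ε 1 with hη_def
  have hη0 : 0 < η := lt_min hε one_pos
  have hηε : η ≤ ε := min_le_left _ _
  have hη1 : η ≤ 1 := min_le_right _ _
  set c : ℕ → ℝ := fun n => η * (1 - (2:ℝ)⁻¹ ^ (n + 1)) with hc_def
  have hpow_pos : ∀ k : ℕ, (0:ℝ) < (2:ℝ)⁻¹ ^ k := fun k => pow_pos (by norm_num) k
  have hpow_le : ∀ k l : ℕ, k ≤ l → (2:ℝ)⁻¹ ^ l ≤ (2:ℝ)⁻¹ ^ k :=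
    fun k l h => pow_le_pow_of_le_one (by norm_num) (by norm_num) h
  have hc_pos : ∀ n, 0 < c n := by
    intro n
    have h2 : (2:ℝ)⁻¹ ^ (n+1) ≤ 1/2 := by
      have := hpow_le 1 (n+1) (by omega); simpa using this
    simp only [hc_def]
    apply mul_pos hη0; linarith
  have hc_le_η : ∀ n, c n ≤ η := by
    intro n
    simp only [hc_def]
    nlinarith [mul_pos hη0 (hpow_pos (n+1))]
  have hc_key : ∀ (n : ℕ) (i : Fin n), c i ≤ c n - η * (2:ℝ)⁻¹ ^ (n+1) := by
    intro n i
    have h1 : (2:ℝ)⁻¹ ^ n ≤ (2:ℝ)⁻¹ ^ ((i:ℕ)+1) := hpow_le _ _ (by omega)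
    have h2 : (2:ℝ)⁻¹ ^ (n+1) = (2:ℝ)⁻¹ ^ n * 2⁻¹ := pow_succ _ _
    have h3 : η * ((2:ℝ)⁻¹ ^ n) ≤ η * ((2:ℝ)⁻¹ ^ ((i:ℕ)+1)) :=
      mul_le_mul_of_nonneg_left h1 hη0.le
    simp only [hc_def]
    nlinarith [h3]
  have hc_mono : ∀ {i n : ℕ}, i ≤ n → c i ≤ c n := by
    intro i n h
    have h1 : (2:ℝ)⁻¹ ^ (n+1) ≤ (2:ℝ)⁻¹ ^ (i+1) := hpow_le _ _ (by omega)
    have h3 : η * ((2:ℝ)⁻¹ ^ (n+1)) ≤ η * ((2:ℝ)⁻¹ ^ (i+1)) :=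
      mul_le_mul_of_nonneg_left h1 hη0.le
    simp only [hc_def]
    nlinarith [h3]
  -- the key one-step extension
  have key : ∀ (n : ℕ) (v : Fin n → SQ),
      (∀ i j : Fin n, dist (v i) (v j) = dist (u ↑i) (u ↑j)) →
      (∀ i : Fin n, dist (eA (v i)) (eB (u ↑i)) ≤ c ↑i) →
      ∃ x : SQ, (∀ i : Fin n, dist x (v i) = dist (u n) (u ↑i)) ∧
        dist (eA x) (eB (u n)) ≤ c n := by
    intro n v hv1 hv2
    by_cases hdup : ∃ i : Fin n, u ↑i = u n
    · obtain ⟨i, hi⟩ := hdup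
      refine ⟨v i, fun j => ?_, ?_⟩
      · rw [hv1 i j, hi]
      · rw [← hi]
        exact (hv2 i).trans (hc_mono (le_of_lt i.isLt))
    · push_neg at hdup
      rcases Nat.eq_zero_or_pos n with rfl | hn
      · obtain ⟨y₀, hy₀ball, hy₀A⟩ := Metric.dense_iff.1 hAdense (eB (u 0)) (c 0) (hc_pos 0)
        rw [← hranA] at hy₀A; obtain ⟨x0, rfl⟩ := hy₀A
        exact ⟨x0, fun i => i.elim0, le_of_lt (Metric.mem_ball.1 hy₀ball)⟩
      haveI : Nonempty (Fin n) := ⟨⟨0, hn⟩⟩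
      have hne' : (Finset.univ : Finset (Fin n)).Nonempty := Finset.univ_nonempty
      have rpos : ∀ i : Fin n, 0 < dist (u n) (u ↑i) := fun i => dist_pos.2 (Ne.symm (hdup i))
      set γ := η * (2:ℝ)⁻¹ ^ (n+1) with hγdef
      have hγ : 0 < γ := mul_pos hη0 (hpow_pos _)
      have hγhalf : γ ≤ 1/2 := by
        have h1 : (2:ℝ)⁻¹ ^ (n+1) ≤ 1/2 := by
          have := hpow_le 1 (n+1) (by omega); simpa using this
        simp only [hγdef]
        nlinarith [hη0, hη1, hpow_pos (n+1)]
      have hrd : ∀ i : Fin n,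
          |dist (u n) (u ↑i) - dist (eA (v i)) (eB (u n))| ≤ c ↑i := by
        intro i
        have h := abs_dist_sub_le (eB (u ↑i)) (eA (v i)) (eB (u n))
        rw [hisoB.dist_eq, dist_comm (u ↑i) (u n), dist_comm (eB (u ↑i)) (eA (v i))] at h
        exact h.trans (hv2 i)
      have hamalg : ∀ i j : Fin n,
          |dist (u n) (u ↑i) - dist (eA (v i)) (eB (u n))| ≤
            dist (u n) (u ↑j) + dist (eA (v j)) (eB (u n)) := by
        intro i j
        have hAB : dist (eA (v i)) (eA (v j)) = dist (u ↑i) (u ↑j) := by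
          rw [hisoA.dist_eq, hv1]
        have t1 : dist (eA (v i)) (eB (u n)) ≤
            dist (eA (v i)) (eA (v j)) + dist (eA (v j)) (eB (u n)) := dist_triangle _ _ _
        have t2 : dist (u ↑i) (u ↑j) ≤ dist (u ↑i) (u n) + dist (u n) (u ↑j) := dist_triangle _ _ _
        have t3 : dist (u n) (u ↑i) ≤ dist (u n) (u ↑j) + dist (u ↑j) (u ↑i) := dist_triangle _ _ _
        have t4 : dist (u ↑j) (u ↑i) = dist (eA (v j)) (eA (v i)) := by
          rw [hisoA.dist_eq, hv1]
        have t5 : dist (eA (v j)) (eA (v i)) ≤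
            dist (eA (v j)) (eB (u n)) + dist (eB (u n)) (eA (v i)) := dist_triangle _ _ _
        have c1 : dist (u ↑i) (u n) = dist (u n) (u ↑i) := dist_comm _ _
        have c2 : dist (eB (u n)) (eA (v i)) = dist (eA (v i)) (eB (u n)) := dist_comm _ _
        rw [abs_le]
        constructor
        · linarith
        · linarith
      obtain ⟨iU, -, hiU⟩ := Finset.exists_mem_eq_inf' hne'
        (fun i : Fin n => dist (u n) (u ↑i) + dist (eA (v i)) (eB (u n)))
      obtain ⟨iρ, -, hiρ⟩ := Finset.exists_mem_eq_inf' hne' (fun i : Fin n => dist (u n) (u ↑i))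
      set L := Finset.univ.sup' hne'
        (fun i : Fin n => |dist (u n) (u ↑i) - dist (eA (v i)) (eB (u n))|) with hLdef
      set U := Finset.univ.inf' hne'
        (fun i : Fin n => dist (u n) (u ↑i) + dist (eA (v i)) (eB (u n))) with hUdef
      set ρ := Finset.univ.inf' hne' (fun i : Fin n => dist (u n) (u ↑i)) with hρdef
      have hLle : ∀ i : Fin n,
          |dist (u n) (u ↑i) - dist (eA (v i)) (eB (u n))| ≤ L := by
        intro i; rw [hLdef]
        exact Finset.le_sup'
          (fun i : Fin n => |dist (u n) (u ↑i) - dist (eA (v i)) (eB (u n))|)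
          (Finset.mem_univ i)
      have hUle : ∀ i : Fin n, U ≤ dist (u n) (u ↑i) + dist (eA (v i)) (eB (u n)) := by
        intro i; rw [hUdef]
        exact Finset.inf'_le
          (fun i : Fin n => dist (u n) (u ↑i) + dist (eA (v i)) (eB (u n)))
          (Finset.mem_univ i)
      have hρle : ∀ i : Fin n, ρ ≤ dist (u n) (u ↑i) := by
        intro i; rw [hρdef]
        exact Finset.inf'_le (fun i : Fin n => dist (u n) (u ↑i)) (Finset.mem_univ i)
      have hLU : L ≤ U := by
        rw [hLdef, hUdef]
        exact Finset.sup'_le _ _ fun i _ => Finset.le_inf' _ _ fun j _ => hamalg i j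
      have hLc : L ≤ c n - γ := by
        rw [hLdef]
        exact Finset.sup'_le _ _ fun i _ => (hrd i).trans (hc_key n i)
      have hUpos : 0 < U := by
        rw [hiU]; have := rpos iU
        have := dist_nonneg (x := eA (v iU)) (y := eB (u n))
        linarith
      have hρpos : 0 < ρ := by rw [hiρ]; exact rpos iρ
      have hγc : γ/2 ≤ c n - γ := by
        have h1 : (2:ℝ)⁻¹ ^ (n+1) ≤ (2:ℝ)⁻¹ ^ 2 := hpow_le 2 (n+1) (by omega)
        have h1' : (2:ℝ)⁻¹ ^ (n+1) ≤ 1/4 := by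
          have h2 : ((2:ℝ)⁻¹) ^ 2 = 1/4 := by norm_num
          linarith [h1, h2.le, h2.ge]
        have h4 : η * ((2:ℝ)⁻¹ ^ (n+1)) ≤ η * (1/4) :=
          mul_le_mul_of_nonneg_left h1' hη0.le
        simp only [hγdef, hc_def]
        nlinarith [h4, hη0, hpow_pos (n+1)]
      set t := max L (min U (γ/2)) with htdef
      have htL : L ≤ t := le_max_left _ _
      have htU : t ≤ U := max_le hLU (min_le_left _ _)
      have htc : t ≤ c n - γ := max_le hLc ((min_le_right _ _).trans hγc)
      have htpos : 0 < t := lt_of_lt_of_le (lt_min hUpos (half_pos hγ)) (le_max_right _ _)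
      have ht1 : t ≤ 1 := by
        have h1 := hc_le_η n
        linarith [hγ, htc]
      have he1 : ∀ i : Fin n, |dist (u n) (u ↑i) - t| ≤ dist (eA (v i)) (eB (u n)) := by
        intro i
        rw [abs_le]
        constructor
        · linarith [htU, hUle i]
        · linarith [le_abs_self (dist (u n) (u ↑i) - dist (eA (v i)) (eB (u n))), hLle i, htL]
      have he2 : ∀ i : Fin n, dist (eA (v i)) (eB (u n)) ≤ dist (u n) (u ↑i) + t := by
        intro i
        linarith [neg_abs_le (dist (u n) (u ↑i) - dist (eA (v i)) (eB (u n))), hLle i, htL]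
      set F₁ : Finset S := (Finset.univ.image fun i : Fin n => eA (v i)) ∪ {eB (u n)} with hF₁
      set f₁ : S → ℝ := fun y =>
        if h : ∃ i : Fin n, eA (v i) = y then dist (u n) (u ↑h.choose) else t with hf₁
      have hmem1 : ∀ i : Fin n, eA (v i) ∈ F₁ := fun i =>
        Finset.mem_union_left _ (Finset.mem_image.2 ⟨i, Finset.mem_univ i, rfl⟩)
      have hmemB : eB (u n) ∈ F₁ := Finset.mem_union_right _ (Finset.mem_singleton_self _)
      have hcase : ∀ y ∈ F₁, (∃ i : Fin n, eA (v i) = y ∧ f₁ y = dist (u n) (u ↑i)) ∨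
          (y = eB (u n) ∧ f₁ y = t) := by
        intro y hy
        by_cases h : ∃ i : Fin n, eA (v i) = y
        · exact Or.inl ⟨h.choose, h.choose_spec, by simp only [hf₁]; rw [dif_pos h]⟩
        · right
          refine ⟨?_, by simp only [hf₁]; rw [dif_neg h]⟩
          rcases Finset.mem_union.1 hy with hy' | hy'
          · obtain ⟨i, -, hi⟩ := Finset.mem_image.1 hy'
            exact absurd ⟨i, hi⟩ h
          · exact Finset.mem_singleton.1 hy'
      have hrw1 : ∀ i : Fin n, f₁ (eA (v i)) = dist (u n) (u ↑i) := by
        intro i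
        have h : ∃ j : Fin n, eA (v j) = eA (v i) := ⟨i, rfl⟩
        have hval' : f₁ (eA (v i)) = dist (u n) (u ↑(h.choose)) := by
          simp only [hf₁]; rw [dif_pos h]
        have hvv : v h.choose = v i := hisoA.injective h.choose_spec
        have huu : u (h.choose : ℕ) = u (i : ℕ) := by
          apply eq_of_dist_eq_zero
          rw [← hv1 h.choose i, hvv, dist_self]
        rw [hval', huu]
      have hpos1 : ∀ y ∈ F₁, 0 < f₁ y := by
        intro y hy
        rcases hcase y hy with ⟨i, -, hfy⟩ | ⟨-, hfy⟩
        · rw [hfy]; exact rpos i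
        · rw [hfy]; exact htpos
      have hle1' : ∀ y ∈ F₁, f₁ y ≤ 1 := by
        intro y hy
        rcases hcase y hy with ⟨i, -, hfy⟩ | ⟨-, hfy⟩
        · rw [hfy]; exact hSQ1 _ _
        · rw [hfy]; exact ht1
      have hK1' : ∀ y ∈ F₁, ∀ z ∈ F₁, |f₁ y - f₁ z| ≤ dist y z := by
        intro y hy z hz
        rcases hcase y hy with ⟨i, hiy, hfy⟩ | ⟨hyB, hfy⟩ <;>
          rcases hcase z hz with ⟨j, hjz, hfz⟩ | ⟨hzB, hfz⟩
        · rw [hfy, hfz, ← hiy, ← hjz, hisoA.dist_eq, hv1 i j]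
          have h := abs_dist_sub_le (u ↑i) (u ↑j) (u n)
          rwa [dist_comm (u ↑i) (u n), dist_comm (u ↑j) (u n)] at h
        · rw [hfy, hfz, ← hiy, hzB]; exact he1 i
        · rw [hfy, hfz, ← hjz, hyB, abs_sub_comm, dist_comm (eB (u n)) (eA (v j))]
          exact he1 j
        · rw [hfy, hfz, hyB, hzB]; simp
      have hK2' : ∀ y ∈ F₁, ∀ z ∈ F₁, dist y z ≤ f₁ y + f₁ z := by
        intro y hy z hz
        rcases hcase y hy with ⟨i, hiy, hfy⟩ | ⟨hyB, hfy⟩ <;>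
          rcases hcase z hz with ⟨j, hjz, hfz⟩ | ⟨hzB, hfz⟩
        · rw [hfy, hfz, ← hiy, ← hjz, hisoA.dist_eq, hv1 i j]
          have h := dist_triangle (u ↑i) (u n) (u ↑j)
          rw [dist_comm (u ↑i) (u n)] at h
          linarith
        · rw [hfy, hfz, ← hiy, hzB]; exact he2 i
        · rw [hfy, hfz, ← hjz, hyB, dist_comm (eB (u n)) (eA (v j))]
          linarith [he2 j]
        · rw [hfy, hfz, hyB, hzB, dist_self]
          linarith [htpos]
      obtain ⟨s, hs⟩ := realize_S hS F₁ f₁ hpos1 hle1' hK1' hK2'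
      have hs_r : ∀ i : Fin n, dist s (eA (v i)) = dist (u n) (u ↑i) := fun i => by
        rw [hs _ (hmem1 i), hrw1 i]
      have hs_B : dist s (eB (u n)) ≤ c n - γ := by
        rw [hs _ hmemB]
        rcases hcase _ hmemB with ⟨i, hiy, hfy⟩ | ⟨-, hfy⟩
        · rw [hfy]
          have hd0 : dist (eA (v i)) (eB (u n)) = 0 := by rw [hiy, dist_self]
          have h := hrd i
          rw [hd0, sub_zero, abs_of_nonneg dist_nonneg] at h
          exact h.trans (hc_key n i)
        · rw [hfy]; exact htc
      obtain ⟨δq, hδq0, hδqlt⟩ :=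
        exists_rat_btwn (show (0:ℝ) < min ρ (γ/2) from lt_min hρpos (half_pos hγ))
      have hδρ : (δq:ℝ) ≤ ρ := le_of_lt (lt_of_lt_of_le hδqlt (min_le_left _ _))
      have hδγ : (δq:ℝ) < γ/2 := lt_of_lt_of_le hδqlt (min_le_right _ _)
      obtain ⟨y₀, hy₀ball, hy₀A⟩ := Metric.dense_iff.1 hAdense s (δq:ℝ) hδq0
      rw [← hranA] at hy₀A
      obtain ⟨aq, rfl⟩ := hy₀A
      have hy₀ : dist (eA aq) s < (δq:ℝ) := Metric.mem_ball.1 hy₀ball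
      have haq : ∀ i : Fin n, v i ≠ aq := by
        intro i h
        have h2 : dist (eA (v i)) s < (δq:ℝ) := by rw [h]; exact hy₀
        rw [dist_comm (eA (v i)) s, hs_r i] at h2
        exact absurd h2 (not_lt.2 (hδρ.trans (hρle i)))
      have haqd : ∀ i : Fin n, |dist (v i) aq - dist (u n) (u ↑i)| ≤ dist (eA aq) s := by
        intro i
        have h := abs_dist_sub_le (eA aq) s (eA (v i))
        rw [hs_r i, dist_comm (eA aq) (eA (v i)), hisoA.dist_eq] at h
        exact h
      set F₂ : Finset SQ := (Finset.univ.image v) ∪ {aq} with hF₂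
      set f₂ : SQ → ℝ := fun z =>
        if h : ∃ i : Fin n, v i = z then dist (u n) (u ↑h.choose) else (δq:ℝ) with hf₂
      have hmem2 : ∀ i : Fin n, v i ∈ F₂ := fun i =>
        Finset.mem_union_left _ (Finset.mem_image.2 ⟨i, Finset.mem_univ i, rfl⟩)
      have hmemaq : aq ∈ F₂ := Finset.mem_union_right _ (Finset.mem_singleton_self _)
      have hcase2 : ∀ z ∈ F₂, (∃ i : Fin n, v i = z ∧ f₂ z = dist (u n) (u ↑i)) ∨
          (z = aq ∧ f₂ z = (δq:ℝ)) := by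
        intro z hz
        by_cases h : ∃ i : Fin n, v i = z
        · exact Or.inl ⟨h.choose, h.choose_spec, by simp only [hf₂]; rw [dif_pos h]⟩
        · right
          refine ⟨?_, by simp only [hf₂]; rw [dif_neg h]⟩
          rcases Finset.mem_union.1 hz with hz' | hz'
          · obtain ⟨i, -, hi⟩ := Finset.mem_image.1 hz'
            exact absurd ⟨i, hi⟩ h
          · exact Finset.mem_singleton.1 hz'
      have hrw2 : ∀ i : Fin n, f₂ (v i) = dist (u n) (u ↑i) := by
        intro i
        have h : ∃ j : Fin n, v j = v i := ⟨i, rfl⟩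
        have hval' : f₂ (v i) = dist (u n) (u ↑(h.choose)) := by
          simp only [hf₂]; rw [dif_pos h]
        have huu : u (h.choose : ℕ) = u (i : ℕ) := by
          apply eq_of_dist_eq_zero
          rw [← hv1 h.choose i, h.choose_spec, dist_self]
        rw [hval', huu]
      have hrwaq : f₂ aq = (δq:ℝ) := by
        simp only [hf₂]
        rw [dif_neg]
        push_neg
        exact fun i => haq i
      have hpos2 : ∀ z ∈ F₂, 0 < f₂ z := by
        intro z hz
        rcases hcase2 z hz with ⟨i, -, hfz⟩ | ⟨-, hfz⟩
        · rw [hfz]; exact rpos i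
        · rw [hfz]; exact hδq0
      have hrat2 : ∀ z ∈ F₂, ∃ q : ℚ, 0 ≤ q ∧ q ≤ 1 ∧ f₂ z = q := by
        intro z hz
        rcases hcase2 z hz with ⟨i, -, hfz⟩ | ⟨-, hfz⟩
        · obtain ⟨q, hq0, hq1, hqe⟩ := hSQrat (u n) (u ↑i)
          exact ⟨q, hq0, hq1, by rw [hfz, hqe]⟩
        · refine ⟨δq, ?_, ?_, hfz⟩
          · exact_mod_cast hδq0.le
          · have : (δq:ℝ) ≤ 1 := by linarith [hδγ, hγhalf]
            exact_mod_cast this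
      have hK1₂ : ∀ y ∈ F₂, ∀ z ∈ F₂, |f₂ y - f₂ z| ≤ dist y z := by
        intro y hy z hz
        rcases hcase2 y hy with ⟨i, hiy, hfy⟩ | ⟨hyB, hfy⟩ <;>
          rcases hcase2 z hz with ⟨j, hjz, hfz⟩ | ⟨hzB, hfz⟩
        · rw [hfy, hfz, ← hiy, ← hjz, hv1 i j]
          have h := abs_dist_sub_le (u ↑i) (u ↑j) (u n)
          rwa [dist_comm (u ↑i) (u n), dist_comm (u ↑j) (u n)] at h
        · rw [hfy, hfz, ← hiy, hzB, abs_le]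
          constructor
          · have := dist_nonneg (x := v i) (y := aq)
            linarith [hδρ, hρle i]
          · have h := abs_le.1 (haqd i)
            linarith [h.1, hy₀]
        · rw [hfy, hfz, ← hjz, hyB, abs_sub_comm, dist_comm aq (v j), abs_le]
          constructor
          · have := dist_nonneg (x := v j) (y := aq)
            linarith [hδρ, hρle j]
          · have h := abs_le.1 (haqd j)
            linarith [h.1, hy₀]
        · rw [hfy, hfz, hyB, hzB]; simp
      have hK2₂ : ∀ y ∈ F₂, ∀ z ∈ F₂, dist y z ≤ f₂ y + f₂ z := by
        intro y hy z hz
        rcases hcase2 y hy with ⟨i, hiy, hfy⟩ | ⟨hyB, hfy⟩ <;>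
          rcases hcase2 z hz with ⟨j, hjz, hfz⟩ | ⟨hzB, hfz⟩
        · rw [hfy, hfz, ← hiy, ← hjz, hv1 i j]
          have h := dist_triangle (u ↑i) (u n) (u ↑j)
          rw [dist_comm (u ↑i) (u n)] at h
          linarith
        · rw [hfy, hfz, ← hiy, hzB]
          have h := abs_le.1 (haqd i)
          linarith [h.2, hy₀]
        · rw [hfy, hfz, ← hjz, hyB, dist_comm]
          have h := abs_le.1 (haqd j)
          linarith [h.2, hy₀]
        · rw [hfy, hfz, hyB, hzB, dist_self]
          linarith [hδq0]
      obtain ⟨w, hw⟩ := realize_Q hSQ F₂ f₂ hpos2 hrat2 hK1₂ hK2₂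
      refine ⟨w, fun i => ?_, ?_⟩
      · rw [hw _ (hmem2 i), hrw2 i]
      · have h1 : dist w aq = (δq:ℝ) := by rw [hw _ hmemaq, hrwaq]
        have t1 : dist (eA w) (eB (u n)) ≤
            dist (eA w) (eA aq) + dist (eA aq) (eB (u n)) := dist_triangle _ _ _
        have t2 : dist (eA aq) (eB (u n)) ≤ dist (eA aq) s + dist s (eB (u n)) :=
          dist_triangle _ _ _
        have t3 : dist (eA w) (eA aq) = dist w aq := hisoA.dist_eq _ _
        linarith [hs_B, hy₀, hδγ, h1]
  -- packaging the extension step with `Fin.snoc`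
  have snoc_inv : ∀ (n : ℕ) (v : Fin n → SQ),
      (∀ i j : Fin n, dist (v i) (v j) = dist (u ↑i) (u ↑j)) →
      (∀ i : Fin n, dist (eA (v i)) (eB (u ↑i)) ≤ c ↑i) →
      ∀ x : SQ, (∀ i : Fin n, dist x (v i) = dist (u n) (u ↑i)) →
      dist (eA x) (eB (u n)) ≤ c n →
      (∀ i j : Fin (n+1),
        dist (Fin.snoc (α := fun _ => SQ) v x i) (Fin.snoc (α := fun _ => SQ) v x j)
          = dist (u ↑i) (u ↑j)) ∧
      (∀ i : Fin (n+1),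
        dist (eA (Fin.snoc (α := fun _ => SQ) v x i)) (eB (u ↑i)) ≤ c ↑i) := by
    intro n v hv1 hv2 x hx1 hx2
    constructor
    · intro i j
      induction i using Fin.lastCases with
      | last =>
        induction j using Fin.lastCases with
        | last => simp
        | cast j =>
          simp only [Fin.snoc_last, Fin.snoc_castSucc, Fin.val_last, Fin.coe_castSucc]
          exact hx1 j
      | cast i =>
        induction j using Fin.lastCases with
        | last =>
          simp only [Fin.snoc_last, Fin.snoc_castSucc, Fin.val_last, Fin.coe_castSucc]
          rw [dist_comm (v i) x, hx1 i, dist_comm]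
        | cast j =>
          simp only [Fin.snoc_castSucc, Fin.coe_castSucc]
          exact hv1 i j
    · intro i
      induction i using Fin.lastCases with
      | last =>
        simp only [Fin.snoc_last, Fin.val_last]
        exact hx2
      | cast i =>
        simp only [Fin.snoc_castSucc, Fin.coe_castSucc]
        exact hv2 i
  -- build the sequence of finite approximations
  let W : ∀ n : ℕ, {v : Fin n → SQ //
      (∀ i j : Fin n, dist (v i) (v j) = dist (u ↑i) (u ↑j)) ∧
      (∀ i : Fin n, dist (eA (v i)) (eB (u ↑i)) ≤ c ↑i)} := fun n =>
    Nat.rec (motive := fun n => {v : Fin n → SQ //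
        (∀ i j : Fin n, dist (v i) (v j) = dist (u ↑i) (u ↑j)) ∧
        (∀ i : Fin n, dist (eA (v i)) (eB (u ↑i)) ≤ c ↑i)})
      ⟨fun i => i.elim0, fun i => i.elim0, fun i => i.elim0⟩
      (fun m ih =>
        ⟨Fin.snoc ih.1 (key m ih.1 ih.2.1 ih.2.2).choose,
          snoc_inv m ih.1 ih.2.1 ih.2.2 _
            (key m ih.1 ih.2.1 ih.2.2).choose_spec.1
            (key m ih.1 ih.2.1 ih.2.2).choose_spec.2⟩) n
  have hWsucc : ∀ m : ℕ,
      (W (m+1)).1 = Fin.snoc (W m).1 ((key m (W m).1 (W m).2.1 (W m).2.2).choose) :=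
    fun m => rfl
  let q : ℕ → SQ := fun m => (W (m+1)).1 (Fin.last m)
  have hstable : ∀ (m k : ℕ) (h : k < m), (W m).1 ⟨k, h⟩ = q k := by
    intro m
    induction m with
    | zero => intro k h; exact absurd h (Nat.not_lt_zero k)
    | succ m ih =>
      intro k h
      rcases Nat.lt_succ_iff_lt_or_eq.1 h with h' | rfl
      · have e1 : (⟨k, h⟩ : Fin (m+1)) = Fin.castSucc ⟨k, h'⟩ := rfl
        rw [e1, hWsucc m, Fin.snoc_castSucc]
        exact ih k h'
      · rfl
  have hqdist : ∀ k l : ℕ, dist (q k) (q l) = dist (u k) (u l) := by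
    intro k l
    have hk : k < k + l + 1 := by omega
    have hl : l < k + l + 1 := by omega
    have h := (W (k+l+1)).2.1 ⟨k, hk⟩ ⟨l, hl⟩
    rwa [hstable _ _ hk, hstable _ _ hl] at h
  have hqclose : ∀ k : ℕ, dist (eA (q k)) (eB (u k)) ≤ c k := by
    intro k
    have h := (W (k+1)).2.2 (Fin.last k)
    simp only [Fin.val_last] at h
    exact h
  choose ν hν using hu
  refine ⟨Set.range (fun x : SQ => eA (q (ν x))), ?_, (fun x : SQ => eA (q (ν x))), ?_, rfl⟩
  · rintro z ⟨x, rfl⟩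
    refine ⟨?_, ?_⟩
    · rw [← hranA]; exact ⟨_, rfl⟩
    · refine ⟨eB x, ?_, ?_⟩
      · rw [← hranB]; exact ⟨x, rfl⟩
      · have h := hqclose (ν x)
        rw [hν x] at h
        exact h.trans ((hc_le_η _).trans hηε)
  · apply Isometry.of_dist_eq
    intro x y
    rw [hisoA.dist_eq, hqdist, hν, hν]
end

section
/- If a Urysohn sphere S is approximately indivisible, then every rational Urysohn sphere S_Q is approximately indivisible. -/
open Metric Classical



open Metric

noncomputable section
variable {X : Type} [MetricSpace X]

def augDist (w : X → ℝ) : Option X → Option X → ℝ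
  | none, none => 0
  | none, some x => w x
  | some x, none => w x
  | some x, some y => dist x y

def augMS (w : X → ℝ) (h0 : ∀ x, 0 < w x)
    (hl : ∀ x y, |w x - w y| ≤ dist x y)
    (hs : ∀ x y, dist x y ≤ w x + w y) : MetricSpace (Option X) where
  dist := augDist w
  dist_self := by rintro (_|x) <;> simp [augDist]
  dist_comm := by rintro (_|x) (_|y) <;> simp [augDist, dist_comm]
  dist_triangle := by
    rintro (_|x) (_|y) (_|z) <;> simp only [augDist]
    · simp
    · have := (h0 z).le; linarith
    · have := (h0 y).le; linarith
    · have := abs_le.mp (hl y z); linarith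
    · simp [dist_nonneg]
    · exact hs x z
    · have := abs_le.mp (hl x y); linarith
    · exact dist_triangle x y z
  eq_of_dist_eq_zero := by
    rintro (_|x) (_|y) h <;> simp only [augDist] at h
    · rfl
    · exact absurd h (ne_of_gt (h0 y))
    · exact absurd h (ne_of_gt (h0 x))
    · rw [dist_eq_zero] at h; rw [h]

end

section Ext
local notation "IUH" => 0

/-- One-point extension property of a rational Urysohn sphere. -/
theorem rat_ext {SQ : Type} [MetricSpace SQ] [Nonempty SQ]
    (hhom : ∀ F : Set SQ, F.Finite → ∀ φ : F → SQ, Isometry φ →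
      ∃ ψ : SQ ≃ᵢ SQ, ∀ x : F, ψ x = φ x)
    (hrat : ∀ x y : SQ, ∃ q : ℚ, 0 ≤ q ∧ q ≤ 1 ∧ dist x y = q)
    (huniv : ∀ (Y : Type) [MetricSpace Y], Countable Y →
      (∀ a b : Y, ∃ q : ℚ, 0 ≤ q ∧ q ≤ 1 ∧ dist a b = q) →
      ∃ f : Y → SQ, Isometry f)
    {n : ℕ} (p : Fin n → SQ) (v : Fin n → ℝ)
    (hv0 : ∀ i, 0 ≤ v i) (hv1 : ∀ i, v i ≤ 1) (hvq : ∀ i, ∃ q : ℚ, v i = (q : ℝ))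
    (hlip : ∀ i j, |v i - v j| ≤ dist (p i) (p j))
    (hsum : ∀ i j, dist (p i) (p j) ≤ v i + v j) :
    ∃ y : SQ, ∀ i, dist y (p i) = v i := by
  by_cases hz : ∃ i, v i = 0
  · obtain ⟨i, hi⟩ := hz
    refine ⟨p i, fun j => ?_⟩
    have h1 := hlip i j
    have h2 := hsum i j
    rw [hi] at h1 h2
    rw [abs_sub_comm, sub_zero, abs_of_nonneg (hv0 j)] at h1
    have := dist_comm (p i) (p j)
    linarith
  · push_neg at hz
    have hpos : ∀ i, 0 < v i := fun i => lt_of_le_of_ne (hv0 i) (Ne.symm (hz i))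
    set X := {x // x ∈ Set.range p} with hX
    haveI : Finite X := (Set.finite_range p).to_subtype
    let w : X → ℝ := fun x => v (choose x.2)
    have hw : ∀ (x : X) (i : Fin n), p i = x.1 → w x = v i := by
      intro x i hi
      have hspec : p (choose x.2) = x.1 := choose_spec x.2
      have := hlip (choose x.2) i
      rw [hspec, hi, dist_self] at this
      have := abs_eq_zero.mp (le_antisymm this (abs_nonneg _))
      have : v (choose x.2) = v i := by linarith [sub_eq_zero.mp this]
      exact this
    have hrep : ∀ x : X, ∃ i : Fin n, p i = x.1 := fun x => x.2.imp (fun i hi => hi)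
    have h0 : ∀ x : X, 0 < w x := by
      intro x; obtain ⟨i, hi⟩ := hrep x; rw [hw x i hi]; exact hpos i
    have hlw : ∀ x y : X, |w x - w y| ≤ dist x y := by
      intro x y
      obtain ⟨i, hi⟩ := hrep x; obtain ⟨j, hj⟩ := hrep y
      rw [hw x i hi, hw y j hj, Subtype.dist_eq, ← hi, ← hj]
      exact hlip i j
    have hsw : ∀ x y : X, dist x y ≤ w x + w y := by
      intro x y
      obtain ⟨i, hi⟩ := hrep x; obtain ⟨j, hj⟩ := hrep y
      rw [hw x i hi, hw y j hj, Subtype.dist_eq, ← hi, ← hj]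
      exact hsum i j
    letI MS : MetricSpace (Option X) := augMS w h0 hlw hsw
    have hratO : ∀ a b : Option X, ∃ q : ℚ, 0 ≤ q ∧ q ≤ 1 ∧ dist a b = q := by
      rintro (_|x) (_|y)
      · exact ⟨0, le_refl _, by norm_num, by simp [dist, augDist]⟩
      · obtain ⟨i, hi⟩ := hrep y
        obtain ⟨q, hq⟩ := hvq i
        refine ⟨q, ?_, ?_, ?_⟩
        · exact_mod_cast hq ▸ hv0 i
        · exact_mod_cast hq ▸ hv1 i
        · show augDist w none (some y) = (q : ℝ)
          simp only [augDist]; rw [hw y i hi, hq]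
      · obtain ⟨i, hi⟩ := hrep x
        obtain ⟨q, hq⟩ := hvq i
        refine ⟨q, ?_, ?_, ?_⟩
        · exact_mod_cast hq ▸ hv0 i
        · exact_mod_cast hq ▸ hv1 i
        · show augDist w (some x) none = (q : ℝ)
          simp only [augDist]; rw [hw x i hi, hq]
      · obtain ⟨q, h1, h2, h3⟩ := hrat x.1 y.1
        exact ⟨q, h1, h2, by show augDist w (some x) (some y) = (q : ℝ); simp only [augDist]; rw [Subtype.dist_eq]; exact h3⟩
    obtain ⟨F, hF⟩ := huniv (Option X) inferInstance hratO
    set G : Set SQ := Set.range (fun x : X => F (some x)) with hG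
    have hGfin : G.Finite := Set.finite_range _
    have hmem : ∀ g : G, (g : SQ) ∈ Set.range (fun x : X => F (some x)) := fun g => g.2
    let φ : G → SQ := fun g => (choose (hmem g)).1
    have hφd : ∀ g : G, F (some (choose (hmem g))) = (g : SQ) := fun g => choose_spec (hmem g)
    have hφiso : Isometry φ := by
      apply Isometry.of_dist_eq
      intro g h
      have : dist (φ g) (φ h) = dist (some (choose (hmem g)) : Option X) (some (choose (hmem h))) := by
        show dist (choose (hmem g)).1 (choose (hmem h)).1 = _
        rw [show dist (some (choose (hmem g)) : Option X) (some (choose (hmem h)))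
            = augDist w (some (choose (hmem g))) (some (choose (hmem h))) from rfl]
        simp only [augDist]
        exact (Subtype.dist_eq _ _).symm
      rw [this, ← hF.dist_eq, hφd, hφd, Subtype.dist_eq]
    obtain ⟨ψ, hψ⟩ := hhom G hGfin φ hφiso
    refine ⟨ψ (F none), fun i => ?_⟩
    have hxiX : p i ∈ Set.range p := ⟨i, rfl⟩
    set xi : X := ⟨p i, hxiX⟩ with hxi
    have hgiG : F (some xi) ∈ G := ⟨xi, rfl⟩
    set gi : G := ⟨F (some xi), hgiG⟩ with hgi
    have h1 : ψ (F (some xi)) = φ gi := hψ gi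
    have h2 : φ gi = p i := by
      have : F (some (choose (hmem gi))) = F (some xi) := hφd gi
      have := hF.injective this
      have : choose (hmem gi) = xi := Option.some_injective _ this
      show (choose (hmem gi)).1 = p i
      rw [this]
    have h3 : dist (ψ (F none)) (ψ (F (some xi))) = dist (F none) (F (some xi)) :=
      ψ.dist_eq _ _
    rw [h1, h2] at h3
    rw [h3, hF.dist_eq]
    show augDist w none (some xi) = v i
    simp only [augDist]
    exact hw xi i rfl

end Ext

/-- One-point extension property of a Urysohn sphere. -/
theorem real_ext {S : Type} [MetricSpace S] [Nonempty S]
    (hhom : ∀ F : Set S, F.Finite → ∀ φ : F → S, Isometry φ →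
      ∃ ψ : S ≃ᵢ S, ∀ x : F, ψ x = φ x)
    (hbd : ∀ x y : S, dist x y ≤ 1)
    (huniv : ∀ (Y : Type) [MetricSpace Y], TopologicalSpace.SeparableSpace Y →
      (∀ a b : Y, dist a b ≤ 1) → ∃ f : Y → S, Isometry f)
    {n : ℕ} (p : Fin n → S) (v : Fin n → ℝ)
    (hv0 : ∀ i, 0 ≤ v i) (hv1 : ∀ i, v i ≤ 1)
    (hlip : ∀ i j, |v i - v j| ≤ dist (p i) (p j))
    (hsum : ∀ i j, dist (p i) (p j) ≤ v i + v j) :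
    ∃ y : S, ∀ i, dist y (p i) = v i := by
  by_cases hz : ∃ i, v i = 0
  · obtain ⟨i, hi⟩ := hz
    refine ⟨p i, fun j => ?_⟩
    have h1 := hlip i j
    have h2 := hsum i j
    rw [hi] at h1 h2
    rw [abs_sub_comm, sub_zero, abs_of_nonneg (hv0 j)] at h1
    have := dist_comm (p i) (p j)
    linarith
  · push_neg at hz
    have hpos : ∀ i, 0 < v i := fun i => lt_of_le_of_ne (hv0 i) (Ne.symm (hz i))
    set X := {x // x ∈ Set.range p} with hX
    haveI : Finite X := (Set.finite_range p).to_subtype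
    let w : X → ℝ := fun x => v (choose x.2)
    have hw : ∀ (x : X) (i : Fin n), p i = x.1 → w x = v i := by
      intro x i hi
      have hspec : p (choose x.2) = x.1 := choose_spec x.2
      have := hlip (choose x.2) i
      rw [hspec, hi, dist_self] at this
      have := abs_eq_zero.mp (le_antisymm this (abs_nonneg _))
      have : v (choose x.2) = v i := by linarith [sub_eq_zero.mp this]
      exact this
    have hrep : ∀ x : X, ∃ i : Fin n, p i = x.1 := fun x => x.2.imp (fun i hi => hi)
    have h0 : ∀ x : X, 0 < w x := by
      intro x; obtain ⟨i, hi⟩ := hrep x; rw [hw x i hi]; exact hpos i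
    have hlw : ∀ x y : X, |w x - w y| ≤ dist x y := by
      intro x y
      obtain ⟨i, hi⟩ := hrep x; obtain ⟨j, hj⟩ := hrep y
      rw [hw x i hi, hw y j hj, Subtype.dist_eq, ← hi, ← hj]
      exact hlip i j
    have hsw : ∀ x y : X, dist x y ≤ w x + w y := by
      intro x y
      obtain ⟨i, hi⟩ := hrep x; obtain ⟨j, hj⟩ := hrep y
      rw [hw x i hi, hw y j hj, Subtype.dist_eq, ← hi, ← hj]
      exact hsum i j
    letI MS : MetricSpace (Option X) := augMS w h0 hlw hsw
    haveI : TopologicalSpace.SeparableSpace (Option X) :=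
      ⟨⟨Set.univ, Set.countable_univ, dense_univ⟩⟩
    have hbdO : ∀ a b : Option X, dist a b ≤ 1 := by
      rintro (_|x) (_|y)
      · show (0:ℝ) ≤ 1; norm_num
      · obtain ⟨i, hi⟩ := hrep y
        show augDist w none (some y) ≤ 1
        simp only [augDist]; rw [hw y i hi]; exact hv1 i
      · obtain ⟨i, hi⟩ := hrep x
        show augDist w (some x) none ≤ 1
        simp only [augDist]; rw [hw x i hi]; exact hv1 i
      · show augDist w (some x) (some y) ≤ 1
        simp only [augDist]; rw [Subtype.dist_eq]; exact hbd _ _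
    obtain ⟨F, hF⟩ := huniv (Option X) inferInstance hbdO
    set G : Set S := Set.range (fun x : X => F (some x)) with hG
    have hGfin : G.Finite := Set.finite_range _
    have hmem : ∀ g : G, (g : S) ∈ Set.range (fun x : X => F (some x)) := fun g => g.2
    let φ : G → S := fun g => (choose (hmem g)).1
    have hφd : ∀ g : G, F (some (choose (hmem g))) = (g : S) := fun g => choose_spec (hmem g)
    have hφiso : Isometry φ := by
      apply Isometry.of_dist_eq
      intro g h
      have : dist (φ g) (φ h) = dist (some (choose (hmem g)) : Option X) (some (choose (hmem h))) := by
        show dist (choose (hmem g)).1 (choose (hmem h)).1 = _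
        rw [show dist (some (choose (hmem g)) : Option X) (some (choose (hmem h)))
            = augDist w (some (choose (hmem g))) (some (choose (hmem h))) from rfl]
        simp only [augDist]
        exact (Subtype.dist_eq _ _).symm
      rw [this, ← hF.dist_eq, hφd, hφd, Subtype.dist_eq]
    obtain ⟨ψ, hψ⟩ := hhom G hGfin φ hφiso
    refine ⟨ψ (F none), fun i => ?_⟩
    have hxiX : p i ∈ Set.range p := ⟨i, rfl⟩
    set xi : X := ⟨p i, hxiX⟩ with hxi
    have hgiG : F (some xi) ∈ G := ⟨xi, rfl⟩
    set gi : G := ⟨F (some xi), hgiG⟩ with hgi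
    have h1 : ψ (F (some xi)) = φ gi := hψ gi
    have h2 : φ gi = p i := by
      have : F (some (choose (hmem gi))) = F (some xi) := hφd gi
      have := hF.injective this
      have : choose (hmem gi) = xi := Option.some_injective _ this
      show (choose (hmem gi)).1 = p i
      rw [this]
    have h3 : dist (ψ (F none)) (ψ (F (some xi))) = dist (F none) (F (some xi)) :=
      ψ.dist_eq _ _
    rw [h1, h2] at h3
    rw [h3, hF.dist_eq]
    show augDist w none (some xi) = v i
    simp only [augDist]
    exact hw xi i rfl


noncomputable section

theorem min1_lip {a b d : ℝ} (h : a ≤ b + d) (hd : 0 ≤ d) : min 1 a ≤ min 1 b + d := by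
  rcases le_total b 1 with hb | hb
  · rw [min_eq_right hb]
    exact le_trans (min_le_right _ _) h
  · rw [min_eq_left hb]
    exact le_trans (min_le_left _ _) (by linarith)

section DenseEmbed
variable {SQ S : Type} [MetricSpace SQ] [MetricSpace S]

def DInv (g : ℕ → SQ × S) (n : ℕ) : Prop :=
  ∀ j < n, ∀ l < n, dist (g j).2 (g l).2 = dist (g j).1 (g l).1

theorem dense_step [Nonempty SQ] [Nonempty S]
    (hratQ : ∀ x y : SQ, ∃ q : ℚ, 0 ≤ q ∧ q ≤ 1 ∧ dist x y = q)
    (hbdS : ∀ x y : S, dist x y ≤ 1)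
    (extQ : ∀ {n : ℕ} (p : Fin n → SQ) (v : Fin n → ℝ),
      (∀ i, 0 ≤ v i) → (∀ i, v i ≤ 1) → (∀ i, ∃ q : ℚ, v i = (q : ℝ)) →
      (∀ i j, |v i - v j| ≤ dist (p i) (p j)) →
      (∀ i j, dist (p i) (p j) ≤ v i + v j) →
      ∃ y : SQ, ∀ i, dist y (p i) = v i)
    (extS : ∀ {n : ℕ} (p : Fin n → S) (v : Fin n → ℝ),
      (∀ i, 0 ≤ v i) → (∀ i, v i ≤ 1) →
      (∀ i j, |v i - v j| ≤ dist (p i) (p j)) →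
      (∀ i j, dist (p i) (p j) ≤ v i + v j) →
      ∃ y : S, ∀ i, dist y (p i) = v i)
    (T : ℕ → S) (u : ℕ → SQ) (n : ℕ) (g : ℕ → SQ × S) (hg : DInv g n) :
    ∃ a : SQ × S, (∀ j < n, dist a.2 (g j).2 = dist a.1 (g j).1) ∧
      (n % 2 = 0 → (dist a.2 (T n) ≤ (1/2)^n ∨ ∃ j < n, dist (g j).2 (T n) ≤ (1/2)^n)) ∧
      (n % 2 = 1 → a.1 = u (n / 2)) := by
  have hdQ1 : ∀ x y : SQ, dist x y ≤ 1 := by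
    intro x y; obtain ⟨q, h0, h1, hq⟩ := hratQ x y; rw [hq]; exact_mod_cast h1
  have place : ∀ z : SQ, ∃ y : S, ∀ j : Fin n, dist y ((g j).2) = dist z ((g j).1) := by
    intro z
    apply extS (fun j : Fin n => (g j).2) (fun j : Fin n => dist z ((g j).1))
    · intro i; exact dist_nonneg
    · intro i; exact hdQ1 _ _
    · intro i j
      rw [hg i i.2 j j.2]
      calc |dist z ((g i).1) - dist z ((g j).1)|
          = |dist ((g i).1) z - dist ((g j).1) z| := by rw [dist_comm z, dist_comm z]
        _ ≤ dist ((g i).1) ((g j).1) := abs_dist_sub_le _ _ _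
    · intro i j
      rw [hg i i.2 j j.2]
      calc dist ((g i).1) ((g j).1) ≤ dist ((g i).1) z + dist z ((g j).1) := dist_triangle _ _ _
        _ = dist z ((g i).1) + dist z ((g j).1) := by rw [dist_comm]
  rcases Nat.even_or_odd n with he | ho
  · -- even step : density
    have hmod : n % 2 = 0 := Nat.even_iff.mp he
    by_cases hnear : ∃ j < n, dist (g j).2 (T n) ≤ (1/2)^n
    · obtain ⟨y, hy⟩ := place (u 0)
      exact ⟨(u 0, y), fun j hj => hy ⟨j, hj⟩, fun _ => Or.inr hnear, fun hodd => by omega⟩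
    · push_neg at hnear
      have hτ0 : (0:ℝ) < (1/2)^n := by positivity
      have hτ1 : ((1:ℝ)/2)^n ≤ 1 := pow_le_one₀ (by norm_num) (by norm_num)
      rcases Nat.eq_zero_or_pos n with hn0 | hn
      · subst hn0
        obtain ⟨y, hy⟩ := extS (fun _ : Fin 1 => T 0) (fun _ => (1/2)^0)
          (fun _ => by positivity) (fun _ => by norm_num)
          (fun i j => by rw [sub_self, abs_zero]; exact dist_nonneg)
          (fun i j => by rw [dist_self]; norm_num)
        refine ⟨(u 0, y), fun j hj => by omega, fun _ => Or.inl ?_, fun hh => by omega⟩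
        simpa using (hy 0).le
      · haveI : Nonempty (Fin n) := ⟨⟨0, hn⟩⟩
        set τ : ℝ := (1/2)^n with hτ
        have hf₀big : ∀ j : Fin n, τ < dist ((g j).2) (T n) := fun j => hnear j j.2
        have hmain : ∀ j : Fin n, dist ((g j).2) (T n) + τ/2 < dist ((g j).2) (T n) + τ := by
          intro j; linarith
        have hQ : ∀ l : Fin n, ∃ q : ℚ, dist ((g l).2) (T n) + τ/2 < (q:ℝ) ∧
            (q:ℝ) < dist ((g l).2) (T n) + τ := by
          intro l; obtain ⟨q, h1, h2⟩ := exists_rat_btwn (hmain l); exact ⟨q, h1, h2⟩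
        set Q : Fin n → ℚ := fun l => choose (hQ l) with hQdef
        have hQs : ∀ l : Fin n, dist ((g l).2) (T n) + τ/2 < (Q l : ℝ) ∧
            (Q l : ℝ) < dist ((g l).2) (T n) + τ := fun l => choose_spec (hQ l)
        set raw : Fin n → ℝ :=
          fun j => Finset.univ.inf' Finset.univ_nonempty
            (fun l : Fin n => (Q l : ℝ) + dist ((g j).1) ((g l).1)) with hrawdef
        have hraw_le : ∀ j : Fin n, raw j ≤ (Q j : ℝ) := by
          intro j
          have h1 : raw j ≤ (Q j : ℝ) + dist ((g j).1) ((g j).1) :=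
            Finset.inf'_le _ (Finset.mem_univ j)
          rwa [dist_self, add_zero] at h1
        have hraw_ge : ∀ j : Fin n, dist ((g j).2) (T n) + τ/2 ≤ raw j := by
          intro j
          apply Finset.le_inf'
          intro l _
          have h1 : dist ((g j).2) (T n) ≤ dist ((g l).2) (T n) + dist ((g j).2) ((g l).2) := by
            have h2 := abs_le.mp (abs_dist_sub_le ((g j).2) ((g l).2) (T n))
            linarith [h2.1]
          rw [hg j j.2 l l.2] at h1
          linarith [(hQs l).1]
        set Gv : Fin n → ℝ := fun j => min 1 (raw j) with hGvdef
        have hGv0 : ∀ j, 0 ≤ Gv j := by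
          intro j
          apply le_min (by norm_num)
          have := hraw_ge j
          have := dist_nonneg (x := (g j).2) (y := T n)
          linarith
        have hGv1 : ∀ j, Gv j ≤ 1 := fun j => min_le_left _ _
        have hGvq : ∀ j, ∃ q : ℚ, Gv j = (q : ℝ) := by
          intro j
          obtain ⟨l, _, hl⟩ := Finset.exists_mem_eq_inf' (Finset.univ_nonempty)
            (fun l : Fin n => (Q l : ℝ) + dist ((g j).1) ((g l).1))
          have hl2 : raw j = (Q l : ℝ) + dist ((g j).1) ((g l).1) := hl
          obtain ⟨q, _, _, hq⟩ := hratQ ((g j).1) ((g l).1)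
          refine ⟨min 1 (Q l + q), ?_⟩
          have hh : Gv j = min 1 ((Q l : ℝ) + (q : ℝ)) := by
            show min 1 (raw j) = _
            rw [hl2, hq]
          rw [hh]; push_cast; ring_nf
        have keyraw : ∀ j l : Fin n, raw j ≤ raw l + dist ((g j).1) ((g l).1) := by
          intro j l
          obtain ⟨l', _, hl'⟩ := Finset.exists_mem_eq_inf' (Finset.univ_nonempty)
            (fun m : Fin n => (Q m : ℝ) + dist ((g l).1) ((g m).1))
          have hl2 : raw l = (Q l' : ℝ) + dist ((g l).1) ((g l').1) := hl'
          have h1 : raw j ≤ (Q l' : ℝ) + dist ((g j).1) ((g l').1) :=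
            Finset.inf'_le _ (Finset.mem_univ l')
          have h2 : dist ((g j).1) ((g l').1) ≤ dist ((g j).1) ((g l).1) + dist ((g l).1) ((g l').1) :=
            dist_triangle _ _ _
          rw [hl2]
          linarith
        have hGveq : ∀ j : Fin n, Gv j = min 1 (raw j) := fun _ => rfl
        have hGlip : ∀ j l : Fin n, |Gv j - Gv l| ≤ dist ((g j).1) ((g l).1) := by
          intro j l
          rw [abs_sub_le_iff, hGveq j, hGveq l]
          constructor
          · have := min1_lip (keyraw j l) (dist_nonneg (x := (g j).1) (y := (g l).1))
            linarith
          · have := min1_lip (keyraw l j) (dist_nonneg (x := (g l).1) (y := (g j).1))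
            rw [dist_comm ((g l).1)] at this
            linarith
        have hGvlow : ∀ j : Fin n, min 1 (dist ((g j).2) (T n) + τ/2) ≤ Gv j :=
          fun j => min_le_min (le_refl 1) (hraw_ge j)
        have hGsum : ∀ j l : Fin n, dist ((g j).1) ((g l).1) ≤ Gv j + Gv l := by
          intro j l
          have hd2 : dist ((g j).1) ((g l).1) ≤ dist ((g j).2) (T n) + dist ((g l).2) (T n) := by
            rw [← hg j j.2 l l.2]
            calc dist ((g j).2) ((g l).2)
                ≤ dist ((g j).2) (T n) + dist (T n) ((g l).2) := dist_triangle _ _ _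
              _ = dist ((g j).2) (T n) + dist ((g l).2) (T n) := by rw [dist_comm (T n)]
          rcases le_total (dist ((g j).2) (T n) + τ/2) 1 with h1 | h1
          · rcases le_total (dist ((g l).2) (T n) + τ/2) 1 with h2 | h2
            · have hj' := hGvlow j; rw [min_eq_right h1] at hj'
              have hl' := hGvlow l; rw [min_eq_right h2] at hl'
              linarith
            · have hl' := hGvlow l; rw [min_eq_left h2] at hl'
              have := hGv0 j
              have := hdQ1 ((g j).1) ((g l).1)
              linarith
          · have hj' := hGvlow j; rw [min_eq_left h1] at hj'
            have := hGv0 l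
            have := hdQ1 ((g j).1) ((g l).1)
            linarith
        obtain ⟨z, hz⟩ := extQ (fun j : Fin n => (g j).1) Gv hGv0 hGv1 hGvq
          (fun i j => hGlip i j) (fun i j => hGsum i j)
        have hfbd : ∀ j : Fin n, dist ((g j).2) (T n) ≤ 1 := fun j => hbdS _ _
        have hlipmix : ∀ j : Fin n, |Gv j - τ| ≤ dist ((g j).2) (T n) := by
          intro j
          rw [abs_sub_le_iff]
          constructor
          · have h1 : Gv j ≤ raw j := min_le_right _ _
            have h2 := hraw_le j
            have h3 := (hQs j).2
            linarith
          · rcases le_total (dist ((g j).2) (T n) + τ/2) 1 with h1 | h1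
            · have := hGvlow j; rw [min_eq_right h1] at this
              linarith [hf₀big j]
            · have := hGvlow j; rw [min_eq_left h1] at this
              linarith [hτ1]
        have hsummix : ∀ j : Fin n, dist ((g j).2) (T n) ≤ Gv j + τ := by
          intro j
          rcases le_total (dist ((g j).2) (T n) + τ/2) 1 with h1 | h1
          · have := hGvlow j; rw [min_eq_right h1] at this
            linarith
          · have := hGvlow j; rw [min_eq_left h1] at this
            linarith [hfbd j]
        obtain ⟨y, hy⟩ := extS
          (fun i : Fin (n+1) => if h : (i : ℕ) < n then (g i).2 else T n)
          (fun i : Fin (n+1) => if h : (i : ℕ) < n then Gv ⟨i, h⟩ else τ)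
          (by
            intro i
            by_cases hi : (i : ℕ) < n
            · rw [dif_pos hi]; exact hGv0 _
            · rw [dif_neg hi]; exact hτ0.le)
          (by
            intro i
            by_cases hi : (i : ℕ) < n
            · rw [dif_pos hi]; exact hGv1 _
            · rw [dif_neg hi]; exact hτ1)
          (by
            intro i j
            by_cases hi : (i : ℕ) < n <;> by_cases hj : (j : ℕ) < n
            · rw [dif_pos hi, dif_pos hj, dif_pos hi, dif_pos hj]
              rw [hg i hi j hj]
              exact hGlip ⟨i, hi⟩ ⟨j, hj⟩
            · rw [dif_pos hi, dif_neg hj, dif_pos hi, dif_neg hj]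
              exact hlipmix ⟨i, hi⟩
            · rw [dif_neg hi, dif_pos hj, dif_neg hi, dif_pos hj]
              rw [abs_sub_comm, dist_comm]
              exact hlipmix ⟨j, hj⟩
            · rw [dif_neg hi, dif_neg hj, dif_neg hi, dif_neg hj]
              simpa using dist_nonneg)
          (by
            intro i j
            by_cases hi : (i : ℕ) < n <;> by_cases hj : (j : ℕ) < n
            · rw [dif_pos hi, dif_pos hj, dif_pos hi, dif_pos hj]
              rw [hg i hi j hj]
              exact hGsum ⟨i, hi⟩ ⟨j, hj⟩
            · rw [dif_pos hi, dif_neg hj, dif_pos hi, dif_neg hj]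
              exact hsummix ⟨i, hi⟩
            · rw [dif_neg hi, dif_pos hj, dif_neg hi, dif_pos hj]
              rw [dist_comm]
              have := hsummix ⟨j, hj⟩
              linarith
            · rw [dif_neg hi, dif_neg hj, dif_neg hi, dif_neg hj]
              rw [dist_self]
              linarith)
        refine ⟨(z, y), ?_, fun _ => Or.inl ?_, fun hodd => by omega⟩
        · intro j hj
          have h1 := hy ⟨j, by omega⟩
          dsimp only at h1
          rw [dif_pos hj, dif_pos hj] at h1
          have h2 := hz ⟨j, hj⟩
          show dist y ((g j).2) = dist z ((g j).1)
          rw [h1, h2]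
        · have h1 := hy ⟨n, by omega⟩
          dsimp only at h1
          have hnn : ¬ (n < n) := lt_irrefl n
          rw [dif_neg hnn, dif_neg hnn] at h1
          show dist y (T n) ≤ τ
          rw [h1]
  · -- odd step : placement
    have hmod : n % 2 = 1 := Nat.odd_iff.mp ho
    obtain ⟨y, hy⟩ := place (u (n / 2))
    exact ⟨(u (n / 2), y), fun j hj => hy ⟨j, hj⟩, fun hhe => by omega, fun _ => rfl⟩

end DenseEmbed
end

-- sequence-building machinery
section Seq
variable {α : Type} [Inhabited α]

def mkSeq (step : ℕ → (ℕ → α) → α) : ℕ → ℕ → α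
  | 0 => fun _ => default
  | n + 1 => Function.update (mkSeq step n) n (step n (mkSeq step n))

def outSeq (step : ℕ → (ℕ → α) → α) (n : ℕ) : α := mkSeq step (n + 1) n

theorem mkSeq_stable (step : ℕ → (ℕ → α) → α) {m n n' : ℕ} (h1 : m < n) (h2 : n ≤ n') :
    mkSeq step n' m = mkSeq step n m := by
  induction n' with
  | zero => omega
  | succ k ih =>
    rcases Nat.lt_or_ge k n with hk | hk
    · have : n = k + 1 := by omega
      rw [this]
    · have hne : m ≠ k := by omega
      show Function.update (mkSeq step k) k (step k (mkSeq step k)) m = _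
      rw [Function.update_of_ne hne]
      exact ih (by omega)

theorem mkSeq_eq_outSeq (step : ℕ → (ℕ → α) → α) {m n : ℕ} (h : m < n) :
    mkSeq step n m = outSeq step m := mkSeq_stable step (Nat.lt_succ_self m) h

theorem outSeq_def (step : ℕ → (ℕ → α) → α) (n : ℕ) :
    outSeq step n = step n (mkSeq step n) := by
  show Function.update (mkSeq step n) n (step n (mkSeq step n)) n = _
  rw [Function.update_self]
end Seq

section Assemble
variable {SQ S : Type} [MetricSpace SQ] [MetricSpace S]

theorem dense_embed [Nonempty SQ] [Nonempty S] [Countable SQ]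
    [TopologicalSpace.SeparableSpace S]
    (hratQ : ∀ x y : SQ, ∃ q : ℚ, 0 ≤ q ∧ q ≤ 1 ∧ dist x y = q)
    (hbdS : ∀ x y : S, dist x y ≤ 1)
    (extQ : ∀ {n : ℕ} (p : Fin n → SQ) (v : Fin n → ℝ),
      (∀ i, 0 ≤ v i) → (∀ i, v i ≤ 1) → (∀ i, ∃ q : ℚ, v i = (q : ℝ)) →
      (∀ i j, |v i - v j| ≤ dist (p i) (p j)) →
      (∀ i j, dist (p i) (p j) ≤ v i + v j) →
      ∃ y : SQ, ∀ i, dist y (p i) = v i)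
    (extS : ∀ {n : ℕ} (p : Fin n → S) (v : Fin n → ℝ),
      (∀ i, 0 ≤ v i) → (∀ i, v i ≤ 1) →
      (∀ i j, |v i - v j| ≤ dist (p i) (p j)) →
      (∀ i j, dist (p i) (p j) ≤ v i + v j) →
      ∃ y : S, ∀ i, dist y (p i) = v i) :
    ∃ f : SQ → S, Isometry f ∧ DenseRange f := by
  obtain ⟨u, hu⟩ := exists_surjective_nat SQ
  obtain ⟨sd, hsd⟩ := TopologicalSpace.exists_dense_seq S
  set T : ℕ → S := fun n => sd (Nat.unpair (n/2)).1 with hT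
  letI : Inhabited (SQ × S) := Classical.inhabited_of_nonempty inferInstance
  set step : ℕ → (ℕ → SQ × S) → SQ × S := fun n g =>
    if h : DInv g n then choose (dense_step hratQ hbdS @extQ @extS T u n g h) else default
    with hstepdef
  have hInv : ∀ n, DInv (mkSeq step n) n := by
    intro n
    induction n with
    | zero => intro j hj; omega
    | succ n ih =>
      have hs : step n (mkSeq step n) =
          choose (dense_step hratQ hbdS @extQ @extS T u n (mkSeq step n) ih) := dif_pos ih
      have ha := choose_spec (dense_step hratQ hbdS @extQ @extS T u n (mkSeq step n) ih)
      rw [← hs] at ha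
      rw [show mkSeq step (n+1) = Function.update (mkSeq step n) n (step n (mkSeq step n)) from rfl]
      have upd_lt : ∀ m, m < n →
          Function.update (mkSeq step n) n (step n (mkSeq step n)) m = mkSeq step n m :=
        fun m hm => Function.update_of_ne (by omega) _ _
      have upd_eq : Function.update (mkSeq step n) n (step n (mkSeq step n)) n
          = step n (mkSeq step n) := Function.update_self _ _ _
      intro j hj l hl
      rcases Nat.lt_or_ge j n with hjn | hjn <;> rcases Nat.lt_or_ge l n with hln | hln
      · rw [upd_lt j hjn, upd_lt l hln]
        exact ih j hjn l hln
      · have hl' : l = n := by omega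
        rw [hl', upd_lt j hjn, upd_eq]
        rw [dist_comm, ha.1 j hjn, dist_comm]
      · have hj' : j = n := by omega
        rw [hj', upd_lt l hln, upd_eq]
        exact ha.1 l hln
      · have hj' : j = n := by omega
        have hl' : l = n := by omega
        rw [hj', hl', upd_eq, dist_self, dist_self]
  have hprop : ∀ n,
      (∀ j < n, dist (outSeq step n).2 ((outSeq step j).2) = dist (outSeq step n).1 ((outSeq step j).1)) ∧
      (n % 2 = 0 → (dist (outSeq step n).2 (T n) ≤ (1/2)^n ∨
        ∃ j < n, dist ((outSeq step j).2) (T n) ≤ (1/2)^n)) ∧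
      (n % 2 = 1 → (outSeq step n).1 = u (n / 2)) := by
    intro n
    have h1 : outSeq step n =
        choose (dense_step hratQ hbdS @extQ @extS T u n (mkSeq step n) (hInv n)) := by
      rw [outSeq_def]; exact dif_pos (hInv n)
    have h2 := choose_spec (dense_step hratQ hbdS @extQ @extS T u n (mkSeq step n) (hInv n))
    rw [← h1] at h2
    refine ⟨fun j hj => ?_, fun hev => ?_, h2.2.2⟩
    · have := h2.1 j hj
      rwa [mkSeq_eq_outSeq step hj] at this
    · rcases h2.2.1 hev with hA | ⟨j, hj, hB⟩
      · exact Or.inl hA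
      · rw [mkSeq_eq_outSeq step hj] at hB
        exact Or.inr ⟨j, hj, hB⟩
  set zs : ℕ → SQ := fun n => (outSeq step n).1 with hzs
  set ys : ℕ → S := fun n => (outSeq step n).2 with hys
  have hpair : ∀ j l, dist (ys j) (ys l) = dist (zs j) (zs l) := by
    intro j l
    rcases lt_trichotomy j l with hjl | hjl | hjl
    · rw [dist_comm, (hprop l).1 j hjl, dist_comm]
    · subst hjl; rw [dist_self, dist_self]
    · exact (hprop j).1 l hjl
  have hodd : ∀ k, zs (2*k+1) = u k := by
    intro k
    have h1 := (hprop (2*k+1)).2.2 (by omega)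
    have h2 : (2*k+1)/2 = k := by omega
    rw [h2] at h1
    exact h1
  refine ⟨fun w => ys (2 * choose (hu w) + 1), ?_, ?_⟩
  · apply Isometry.of_dist_eq
    intro a b
    have h1 : zs (2 * choose (hu a) + 1) = a := (hodd _).trans (choose_spec (hu a))
    have h2 : zs (2 * choose (hu b) + 1) = b := (hodd _).trans (choose_spec (hu b))
    rw [hpair, h1, h2]
  · rw [denseRange_iff]
    intro x r hr
    obtain ⟨k1, hk1⟩ := denseRange_iff.mp hsd x (r/2) (half_pos hr)
    obtain ⟨m, hm⟩ := exists_pow_lt_of_lt_one (half_pos hr) (by norm_num : (1:ℝ)/2 < 1)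
    set n := 2 * Nat.pair k1 m with hn
    have hTn : T n = sd k1 := by
      have : n / 2 = Nat.pair k1 m := by omega
      rw [hT]
      simp only [this, Nat.unpair_pair]
    have hτm : ((1:ℝ)/2)^n ≤ (1/2)^m := by
      apply pow_le_pow_of_le_one (by norm_num) (by norm_num)
      have := Nat.right_le_pair k1 m
      omega
    have hev : n % 2 = 0 := by omega
    have key : ∀ j, dist (ys j) (T n) ≤ (1/2)^n → ∃ w, dist x (ys (2 * choose (hu w) + 1)) < r := by
      intro j hj
      refine ⟨zs j, ?_⟩
      have h1 : zs (2 * choose (hu (zs j)) + 1) = zs j := (hodd _).trans (choose_spec (hu (zs j)))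
      have h2 : dist (ys (2 * choose (hu (zs j)) + 1)) (ys j) = 0 := by
        rw [hpair, h1, dist_self]
      have h3 : ys (2 * choose (hu (zs j)) + 1) = ys j := by
        rwa [dist_eq_zero] at h2
      rw [h3]
      calc dist x (ys j) ≤ dist x (sd k1) + dist (sd k1) (ys j) := dist_triangle _ _ _
        _ = dist x (sd k1) + dist (ys j) (T n) := by rw [hTn, dist_comm (ys j) (sd k1)]
        _ < r/2 + r/2 := by
            apply add_lt_add hk1
            calc dist (ys j) (T n) ≤ (1/2)^n := hj
              _ ≤ (1/2)^m := hτm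
              _ < r/2 := hm
        _ = r := by ring
    rcases (hprop n).2.1 hev with hA | ⟨j, _, hB⟩
    · exact key n hA
    · exact key j hB

end Assemble

section Engine
variable {SQ S : Type} [MetricSpace SQ] [MetricSpace S]

def EInv (u : ℕ → SQ) (f : SQ → S) (Φ : S → S) (η : ℝ) (g : ℕ → SQ) (n : ℕ) : Prop :=
  (∀ j < n, ∀ l < n, dist (g j) (g l) = dist (u j) (u l)) ∧
  (∀ j < n, dist (f (g j)) (Φ (f (u j))) ≤ η * (1 - (1/2)^(j+1)))

theorem engine_step [Nonempty SQ]
    (hratQ : ∀ x y : SQ, ∃ q : ℚ, 0 ≤ q ∧ q ≤ 1 ∧ dist x y = q)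
    (extQ : ∀ {n : ℕ} (p : Fin n → SQ) (v : Fin n → ℝ),
      (∀ i, 0 ≤ v i) → (∀ i, v i ≤ 1) → (∀ i, ∃ q : ℚ, v i = (q : ℝ)) →
      (∀ i j, |v i - v j| ≤ dist (p i) (p j)) →
      (∀ i j, dist (p i) (p j) ≤ v i + v j) →
      ∃ y : SQ, ∀ i, dist y (p i) = v i)
    (f : SQ → S) (hf : Isometry f) (hfd : DenseRange f)
    (Φ : S → S) (hΦ : Isometry Φ)
    (u : ℕ → SQ) (η : ℝ) (hη : 0 < η)
    (n : ℕ) (g : ℕ → SQ) (hg : EInv u f Φ η g n) :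
    ∃ y : SQ, (∀ j < n, dist y (g j) = dist (u n) (u j)) ∧
      dist (f y) (Φ (f (u n))) ≤ η * (1 - (1/2)^(n+1)) := by
  have hdQ1 : ∀ x y : SQ, dist x y ≤ 1 := by
    intro x y; obtain ⟨q, h0, h1, hq⟩ := hratQ x y; rw [hq]; exact_mod_cast h1
  have hθ : (0:ℝ) < η * (1/2)^(n+2) := by positivity
  obtain ⟨w, hw⟩ := denseRange_iff.mp hfd (Φ (f (u n))) _ hθ
  rcases Nat.eq_zero_or_pos n with hn0 | hn
  · subst hn0
    refine ⟨w, fun j hj => by omega, ?_⟩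
    have h1 : dist (f w) (Φ (f (u 0))) < η * (1/2)^(0+2) := by
      rw [dist_comm]; exact hw
    have h2 : η * ((1:ℝ)/2)^(0+2) ≤ η * (1 - (1/2)^(0+1)) := by
      norm_num
      linarith
    linarith
  · haveI : Nonempty (Fin n) := ⟨⟨0, hn⟩⟩
    set θ : ℝ := η * (1/2)^(n+2) with hθdef
    set v : ℝ := Finset.univ.sup' Finset.univ_nonempty
      (fun j : Fin n => |dist (g j) w - dist (u n) (u j)|) with hvdef
    have hvge : ∀ j : Fin n, |dist (g j) w - dist (u n) (u j)| ≤ v := by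
      intro j
      rw [hvdef]
      exact Finset.le_sup' (fun j : Fin n => |dist (g (j:ℕ)) w - dist (u n) (u (j:ℕ))|)
        (Finset.mem_univ j)
    have hvle : ∀ j : Fin n, v ≤ dist (g j) w + dist (u n) (u j) := by
      intro j
      rw [hvdef]
      apply Finset.sup'_le
      intro l _
      rw [abs_sub_le_iff]
      constructor
      · have h1 : dist (g l) w ≤ dist (g j) (g l) + dist (g j) w := by
          rw [dist_comm (g j) (g l)]; exact dist_triangle _ _ _
        have h2 : dist (g j) (g l) = dist (u j) (u l) := hg.1 j j.2 l l.2
        have h3 : dist (u j) (u l) ≤ dist (u n) (u j) + dist (u n) (u l) := by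
          rw [dist_comm (u n) (u j)]; exact dist_triangle _ _ _
        linarith
      · have h4 : dist (u n) (u l) ≤ dist (u n) (u j) + dist (u j) (u l) := dist_triangle _ _ _
        have h5 : dist (u j) (u l) = dist (g j) (g l) := (hg.1 j j.2 l l.2).symm
        have h6 : dist (g j) (g l) ≤ dist (g j) w + dist (g l) w := by
          rw [dist_comm (g l) w]; exact dist_triangle _ _ _
        linarith
    have hv0 : 0 ≤ v := le_trans (abs_nonneg _) (hvge ⟨0, hn⟩)
    have hvgeN : ∀ j, (hj : j < n) → |dist (g j) w - dist (u n) (u j)| ≤ v :=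
      fun j hj => hvge ⟨j, hj⟩
    have hvleN : ∀ j, (hj : j < n) → v ≤ dist (g j) w + dist (u n) (u j) :=
      fun j hj => hvle ⟨j, hj⟩
    have hv1 : v ≤ 1 := by
      apply Finset.sup'_le
      intro j _
      rw [abs_sub_le_iff]
      constructor
      · have := hdQ1 (g j) w
        have := dist_nonneg (x := u n) (y := u j)
        linarith
      · have := hdQ1 (u n) (u j)
        have := dist_nonneg (x := g j) (y := w)
        linarith
    have hvq : ∃ q : ℚ, v = (q : ℝ) := by
      obtain ⟨j, _, hj⟩ := Finset.exists_mem_eq_sup' (Finset.univ_nonempty)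
        (fun j : Fin n => |dist (g j) w - dist (u n) (u j)|)
      obtain ⟨q1, _, _, hq1⟩ := hratQ (g j) w
      obtain ⟨q2, _, _, hq2⟩ := hratQ (u n) (u j)
      refine ⟨|q1 - q2|, ?_⟩
      rw [hvdef, hj, hq1, hq2]
      push_cast
      rfl
    obtain ⟨y, hy⟩ := extQ
      (fun i : Fin (n+1) => if h : (i : ℕ) < n then g i else w)
      (fun i : Fin (n+1) => if h : (i : ℕ) < n then dist (u n) (u i) else v)
      (by
        intro i
        by_cases hi : (i : ℕ) < n
        · rw [dif_pos hi]; exact dist_nonneg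
        · rw [dif_neg hi]; exact hv0)
      (by
        intro i
        by_cases hi : (i : ℕ) < n
        · rw [dif_pos hi]; exact hdQ1 _ _
        · rw [dif_neg hi]; exact hv1)
      (by
        intro i
        by_cases hi : (i : ℕ) < n
        · rw [dif_pos hi]
          obtain ⟨q, _, _, hq⟩ := hratQ (u n) (u i)
          exact ⟨q, hq⟩
        · rw [dif_neg hi]; exact hvq)
      (by
        intro i j
        by_cases hi : (i : ℕ) < n <;> by_cases hj : (j : ℕ) < n
        · rw [dif_pos hi, dif_pos hj, dif_pos hi, dif_pos hj]
          rw [hg.1 i hi j hj]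
          calc |dist (u n) (u i) - dist (u n) (u j)|
              = |dist (u i) (u n) - dist (u j) (u n)| := by
                rw [dist_comm (u n) (u i), dist_comm (u n) (u j)]
            _ ≤ dist (u i) (u j) := abs_dist_sub_le _ _ _
        · rw [dif_pos hi, dif_neg hj, dif_pos hi, dif_neg hj]
          rw [abs_sub_le_iff]
          have h1 := abs_le.mp (hvgeN i hi)
          have h2 := hvleN i hi
          constructor
          · linarith [h1.1]
          · linarith
        · rw [dif_neg hi, dif_pos hj, dif_neg hi, dif_pos hj]
          have h1 := abs_le.mp (hvgeN j hj)
          have h2 := hvleN j hj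
          have e1 : dist w (g (j:ℕ)) = dist (g (j:ℕ)) w := dist_comm _ _
          rw [abs_sub_le_iff]
          constructor
          · linarith [h1.1]
          · linarith [h1.2]
        · rw [dif_neg hi, dif_neg hj, dif_neg hi, dif_neg hj]
          rw [sub_self, abs_zero]
          exact dist_nonneg)
      (by
        intro i j
        by_cases hi : (i : ℕ) < n <;> by_cases hj : (j : ℕ) < n
        · rw [dif_pos hi, dif_pos hj, dif_pos hi, dif_pos hj]
          rw [hg.1 i hi j hj]
          calc dist (u i) (u j) ≤ dist (u i) (u n) + dist (u n) (u j) := dist_triangle _ _ _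
            _ = dist (u n) (u i) + dist (u n) (u j) := by rw [dist_comm (u i) (u n)]
        · rw [dif_pos hi, dif_neg hj, dif_pos hi, dif_neg hj]
          have h1 := abs_le.mp (hvgeN i hi)
          linarith [h1.1]
        · rw [dif_neg hi, dif_pos hj, dif_neg hi, dif_pos hj]
          rw [dist_comm]
          have h1 := abs_le.mp (hvgeN j hj)
          linarith [h1.1]
        · rw [dif_neg hi, dif_neg hj, dif_neg hi, dif_neg hj]
          rw [dist_self]
          linarith)
    have hyg : ∀ j, (hj : j < n) → dist y (g j) = dist (u n) (u j) := by
      intro j hj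
      have h1 := hy ⟨j, by omega⟩
      dsimp only at h1
      rw [dif_pos hj, dif_pos hj] at h1
      exact h1
    have hyw : dist y w = v := by
      have h1 := hy ⟨n, by omega⟩
      dsimp only at h1
      have hnn : ¬ (n < n) := lt_irrefl n
      rw [dif_neg hnn, dif_neg hnn] at h1
      exact h1
    refine ⟨y, fun j hj => hyg j hj, ?_⟩
    have hvbound : v ≤ η * (1 - (1/2)^n) + θ := by
      apply Finset.sup'_le
      intro j _
      have ej := hg.2 j j.2
      have hEj : η * (1 - (1/2)^((j:ℕ)+1)) ≤ η * (1 - (1/2)^n) := by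
        apply mul_le_mul_of_nonneg_left _ hη.le
        have : ((1:ℝ)/2)^n ≤ (1/2)^((j:ℕ)+1) :=
          pow_le_pow_of_le_one (by norm_num) (by norm_num) (by omega)
        linarith
      have h3 : dist (g j) w = dist (f (g j)) (f w) := (hf.dist_eq _ _).symm
      have h1 : |dist (f (g j)) (f w) - dist (f (g j)) (Φ (f (u n)))| ≤
          dist (f w) (Φ (f (u n))) := by
        rw [dist_comm (f (g j)) (f w), dist_comm (f (g j)) (Φ (f (u n)))]
        exact abs_dist_sub_le _ _ _
      have h2 : |dist (f (g j)) (Φ (f (u n))) - dist (u n) (u j)| ≤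
          dist (f (g j)) (Φ (f (u j))) := by
        have ha : dist (Φ (f (u j))) (Φ (f (u n))) = dist (u n) (u j) := by
          rw [hΦ.dist_eq, hf.dist_eq, dist_comm]
        calc |dist (f (g j)) (Φ (f (u n))) - dist (u n) (u j)|
            = |dist (f (g j)) (Φ (f (u n))) - dist (Φ (f (u j))) (Φ (f (u n)))| := by rw [ha]
          _ ≤ dist (f (g j)) (Φ (f (u j))) := abs_dist_sub_le _ _ _
      have habs : |dist (g j) w - dist (u n) (u j)| ≤
          dist (f w) (Φ (f (u n))) + dist (f (g j)) (Φ (f (u j))) := by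
        rw [h3]
        calc |dist (f (g j)) (f w) - dist (u n) (u j)|
            ≤ |dist (f (g j)) (f w) - dist (f (g j)) (Φ (f (u n)))| +
              |dist (f (g j)) (Φ (f (u n))) - dist (u n) (u j)| := abs_sub_le _ _ _
          _ ≤ _ := add_le_add h1 h2
      have hwθ : dist (f w) (Φ (f (u n))) ≤ θ := by
        rw [dist_comm]; exact hw.le
      linarith
    have hfin : dist (f y) (Φ (f (u n))) ≤ v + θ := by
      calc dist (f y) (Φ (f (u n)))
          ≤ dist (f y) (f w) + dist (f w) (Φ (f (u n))) := dist_triangle _ _ _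
        _ ≤ v + θ := by
            rw [hf.dist_eq, hyw]
            have : dist (f w) (Φ (f (u n))) ≤ θ := by rw [dist_comm]; exact hw.le
            linarith
    have harith : η * (1 - (1/2)^n) + 2 * θ = η * (1 - (1/2)^(n+1)) := by
      rw [hθdef]
      have e1 : ((1:ℝ)/2)^(n+1) = (1/2)^n * (1/2) := pow_succ _ _
      have e2 : ((1:ℝ)/2)^(n+2) = (1/2)^n * (1/2) * (1/2) := by
        rw [pow_succ, pow_succ]
      rw [e1, e2]; ring
    linarith

end Engine

section EngineAsm
variable {SQ S : Type} [MetricSpace SQ] [MetricSpace S]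

theorem engine [Nonempty SQ]
    (hratQ : ∀ x y : SQ, ∃ q : ℚ, 0 ≤ q ∧ q ≤ 1 ∧ dist x y = q)
    (extQ : ∀ {n : ℕ} (p : Fin n → SQ) (v : Fin n → ℝ),
      (∀ i, 0 ≤ v i) → (∀ i, v i ≤ 1) → (∀ i, ∃ q : ℚ, v i = (q : ℝ)) →
      (∀ i j, |v i - v j| ≤ dist (p i) (p j)) →
      (∀ i j, dist (p i) (p j) ≤ v i + v j) →
      ∃ y : SQ, ∀ i, dist y (p i) = v i)
    (f : SQ → S) (hf : Isometry f) (hfd : DenseRange f)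
    (Φ : S → S) (hΦ : Isometry Φ)
    (u : ℕ → SQ) (hu : Function.Surjective u)
    (η : ℝ) (hη : 0 < η) :
    ∃ e : SQ → SQ, Isometry e ∧ ∀ z : SQ, dist (f (e z)) (Φ (f z)) ≤ η := by
  letI : Inhabited SQ := Classical.inhabited_of_nonempty inferInstance
  set step : ℕ → (ℕ → SQ) → SQ := fun n g =>
    if h : EInv u f Φ η g n then
      choose (engine_step hratQ @extQ f hf hfd Φ hΦ u η hη n g h) else default
    with hstepdef
  have hInv : ∀ n, EInv u f Φ η (mkSeq step n) n := by
    intro n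
    induction n with
    | zero => exact ⟨fun j hj => by omega, fun j hj => by omega⟩
    | succ n ih =>
      have hs : step n (mkSeq step n) =
          choose (engine_step hratQ @extQ f hf hfd Φ hΦ u η hη n (mkSeq step n) ih) :=
        dif_pos ih
      have ha := choose_spec (engine_step hratQ @extQ f hf hfd Φ hΦ u η hη n (mkSeq step n) ih)
      rw [← hs] at ha
      rw [show mkSeq step (n+1) = Function.update (mkSeq step n) n (step n (mkSeq step n)) from rfl]
      have upd_lt : ∀ m, m < n →
          Function.update (mkSeq step n) n (step n (mkSeq step n)) m = mkSeq step n m :=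
        fun m hm => Function.update_of_ne (by omega) _ _
      have upd_eq : Function.update (mkSeq step n) n (step n (mkSeq step n)) n
          = step n (mkSeq step n) := Function.update_self _ _ _
      constructor
      · intro j hj l hl
        rcases Nat.lt_or_ge j n with hjn | hjn <;> rcases Nat.lt_or_ge l n with hln | hln
        · rw [upd_lt j hjn, upd_lt l hln]
          exact ih.1 j hjn l hln
        · have hl' : l = n := by omega
          rw [hl', upd_lt j hjn, upd_eq]
          rw [dist_comm, ha.1 j hjn, dist_comm]
        · have hj' : j = n := by omega
          rw [hj', upd_lt l hln, upd_eq]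
          exact ha.1 l hln
        · have hj' : j = n := by omega
          have hl' : l = n := by omega
          rw [hj', hl', upd_eq, dist_self, dist_self]
      · intro j hj
        rcases Nat.lt_or_ge j n with hjn | hjn
        · rw [upd_lt j hjn]
          exact ih.2 j hjn
        · have hj' : j = n := by omega
          rw [hj', upd_eq]
          exact ha.2
  have hout : ∀ n, outSeq step n =
      choose (engine_step hratQ @extQ f hf hfd Φ hΦ u η hη n (mkSeq step n) (hInv n)) := by
    intro n
    rw [outSeq_def]
    exact dif_pos (hInv n)
  have hprop : ∀ n, (∀ j < n, dist (outSeq step n) (outSeq step j) = dist (u n) (u j)) ∧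
      dist (f (outSeq step n)) (Φ (f (u n))) ≤ η * (1 - (1/2)^(n+1)) := by
    intro n
    have h2 := choose_spec (engine_step hratQ @extQ f hf hfd Φ hΦ u η hη n (mkSeq step n) (hInv n))
    rw [← hout n] at h2
    refine ⟨fun j hj => ?_, h2.2⟩
    have := h2.1 j hj
    rwa [mkSeq_eq_outSeq step hj] at this
  have hglob : ∀ j l, dist (outSeq step j) (outSeq step l) = dist (u j) (u l) := by
    intro j l
    rcases lt_trichotomy j l with hjl | hjl | hjl
    · rw [dist_comm, (hprop l).1 j hjl, dist_comm]
    · subst hjl; rw [dist_self, dist_self]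
    · exact (hprop j).1 l hjl
  refine ⟨fun z => outSeq step (choose (hu z)), ?_, ?_⟩
  · apply Isometry.of_dist_eq
    intro a b
    rw [hglob, choose_spec (hu a), choose_spec (hu b)]
  · intro z
    have h1 := (hprop (choose (hu z))).2
    rw [choose_spec (hu z)] at h1
    have h2 : η * (1 - (1/2)^((choose (hu z))+1)) ≤ η := by
      have h3 : (0:ℝ) ≤ (1/2)^((choose (hu z))+1) := by positivity
      nlinarith
    linarith

end EngineAsm


/-- If a Urysohn sphere is approximately indivisible, then every rational
Urysohn sphere is approximately indivisible. -/
theorem stmt6 (S : Type) [MetricSpace S] (hS : IsUrysohnSphere S)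
    (h : ApproxIndivisible S)
    (SQ : Type) [MetricSpace SQ] (hSQ : IsRationalUrysohnSphere SQ) :
    ApproxIndivisible SQ := by
  classical
  obtain ⟨hcountQ, hhomQ, hratQ, hunivQ⟩ := hSQ
  obtain ⟨hcompS, hsepS, hhomS, hbdS, hunivS⟩ := hS
  haveI : Countable SQ := hcountQ
  haveI : TopologicalSpace.SeparableSpace S := hsepS
  intro ε hε k hk χ
  rcases isEmpty_or_nonempty SQ with hemp | hne
  · exact ⟨⟨0, hk⟩, id, isometry_id, fun z => (IsEmpty.false z).elim⟩
  · -- SQ nonempty; get S nonempty via universality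
    haveI : TopologicalSpace.SeparableSpace SQ :=
      ⟨⟨Set.univ, Set.countable_univ, dense_univ⟩⟩
    have hdQ1 : ∀ a b : SQ, dist a b ≤ 1 := by
      intro a b; obtain ⟨q, h0, h1, hq⟩ := hratQ a b; rw [hq]; exact_mod_cast h1
    obtain ⟨f0, -⟩ := hunivS SQ inferInstance hdQ1
    haveI : Nonempty S := ⟨f0 (Classical.arbitrary SQ)⟩
    -- extension properties
    have extQ : ∀ {n : ℕ} (p : Fin n → SQ) (v : Fin n → ℝ),
        (∀ i, 0 ≤ v i) → (∀ i, v i ≤ 1) → (∀ i, ∃ q : ℚ, v i = (q : ℝ)) →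
        (∀ i j, |v i - v j| ≤ dist (p i) (p j)) →
        (∀ i j, dist (p i) (p j) ≤ v i + v j) →
        ∃ y : SQ, ∀ i, dist y (p i) = v i := by
      intro n p v h1 h2 h3 h4 h5
      exact rat_ext hhomQ hratQ hunivQ p v h1 h2 h3 h4 h5
    have extS : ∀ {n : ℕ} (p : Fin n → S) (v : Fin n → ℝ),
        (∀ i, 0 ≤ v i) → (∀ i, v i ≤ 1) →
        (∀ i j, |v i - v j| ≤ dist (p i) (p j)) →
        (∀ i j, dist (p i) (p j) ≤ v i + v j) →
        ∃ y : S, ∀ i, dist y (p i) = v i := by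
      intro n p v h1 h2 h3 h4
      exact real_ext hhomS hbdS hunivS p v h1 h2 h3 h4
    -- dense isometric embedding of SQ into S
    obtain ⟨f, hfiso, hfdense⟩ := dense_embed hratQ hbdS @extQ @extS
    -- retraction coloring
    have hε3 : (0:ℝ) < ε/3 := by linarith
    have hπ : ∀ s : S, ∃ x : SQ, dist s (f x) < ε/3 :=
      fun s => denseRange_iff.mp hfdense s (ε/3) hε3
    set π : S → SQ := fun s => Classical.choose (hπ s) with hπdef
    have hπs : ∀ s : S, dist s (f (π s)) < ε/3 := fun s => Classical.choose_spec (hπ s)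
    obtain ⟨i, Φ, hΦiso, hΦ⟩ := h (ε/3) hε3 k hk (fun s => χ (π s))
    obtain ⟨u, hu⟩ := exists_surjective_nat SQ
    obtain ⟨e, heiso, he⟩ := engine hratQ @extQ f hfiso hfdense Φ hΦiso u hu (ε/3) hε3
    refine ⟨i, e, heiso, fun z => ?_⟩
    obtain ⟨s', hs'c, hs'd⟩ := hΦ (f z)
    refine ⟨π s', hs'c, ?_⟩
    have h1 : dist (e z) (π s') = dist (f (e z)) (f (π s')) := (hfiso.dist_eq _ _).symm
    have h2 : dist (f (e z)) (f (π s')) ≤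
        dist (f (e z)) (Φ (f z)) + dist (Φ (f z)) s' + dist s' (f (π s')) :=
      dist_triangle4 _ _ _ _
    have h3 := he z
    have h4 := (hπs s').le
    rw [h1]
    linarith
end

section
/- Let ε > 0 and suppose the rational Urysohn sphere S_Q is ε-indivisible. Then for every positive integer m with m ≤ 1/ε, every countable ultrahomogeneous metric space S_m with all distances in [0,1]_m into which every countable metric space with distances in [0,1]_m embeds isometrically is (1/m)-indivisible. -/
open Metric

noncomputable def rdist (m : ℕ) {X : Type} [MetricSpace X] (x y : X) : ℝ :=
  (⌈(m : ℝ) * dist x y⌉₊ : ℝ) / m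

section rdist
variable {m : ℕ} {X : Type} [MetricSpace X]

theorem rdist_self (x : X) : rdist m x x = 0 := by simp [rdist]

theorem rdist_comm (x y : X) : rdist m x y = rdist m y x := by rw [rdist, rdist, dist_comm]

theorem rdist_triangle (hm : 0 < m) (x y z : X) : rdist m x z ≤ rdist m x y + rdist m y z := by
  have hm' : (0:ℝ) < m := by exact_mod_cast hm
  rw [rdist, rdist, rdist, ← add_div, div_le_div_iff_of_pos_right hm']
  have h1 : (m:ℝ) * dist x z ≤ (m:ℝ) * dist x y + (m:ℝ) * dist y z := by
    rw [← mul_add]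
    exact mul_le_mul_of_nonneg_left (dist_triangle _ _ _) (by positivity)
  calc (⌈(m : ℝ) * dist x z⌉₊ : ℝ)
      ≤ ((⌈(m : ℝ) * dist x y⌉₊ + ⌈(m : ℝ) * dist y z⌉₊ : ℕ) : ℝ) := by
        exact_mod_cast Nat.ceil_le.mpr (h1.trans (by
          push_cast
          exact add_le_add (Nat.le_ceil _) (Nat.le_ceil _)))
    _ = _ := by push_cast; ring

theorem rdist_eq_zero (hm : 0 < m) {x y : X} (h : rdist m x y = 0) : x = y := by
  have hm' : (0:ℝ) < m := by exact_mod_cast hm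
  rw [rdist, div_eq_zero_iff] at h
  rcases h with h | h
  · have : (⌈(m : ℝ) * dist x y⌉₊ : ℕ) = 0 := by exact_mod_cast h
    have h2 : (m : ℝ) * dist x y ≤ 0 := Nat.ceil_eq_zero.mp this
    have : dist x y ≤ 0 := nonpos_of_mul_nonpos_right (by linarith) hm'
    exact eq_of_dist_eq_zero (le_antisymm this dist_nonneg)
  · exact absurd h hm'.ne'

end rdist

structure RoundSpace (m : ℕ) (X : Type) where
  val : X

namespace RoundSpace
variable {m : ℕ} {X : Type} [MetricSpace X]

noncomputable instance [NeZero m] : MetricSpace (RoundSpace m X) where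
  dist x y := rdist m x.val y.val
  dist_self x := rdist_self x.val
  dist_comm x y := rdist_comm x.val y.val
  dist_triangle x y z := rdist_triangle (Nat.pos_of_ne_zero (NeZero.ne m)) x.val y.val z.val
  eq_of_dist_eq_zero {x y} h := by
    cases x; cases y
    simpa using rdist_eq_zero (Nat.pos_of_ne_zero (NeZero.ne m)) h

theorem dist_def [NeZero m] (x y : RoundSpace m X) : dist x y = rdist m x.val y.val := rfl

instance [Countable X] : Countable (RoundSpace m X) :=
  Function.Injective.countable (f := fun x : RoundSpace m X => x.val)
    (fun a b h => by cases a; cases b; simpa using h)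

end RoundSpace

/-- If `S_ℚ` is `ε`-indivisible then `S_m` is `1/m`-indivisible whenever
`m ≤ 1/ε`. -/
theorem stmt7 (ε : ℝ) (hε : 0 < ε)
    (SQ : Type) [MetricSpace SQ] (hSQ : IsRationalUrysohnSphere SQ)
    (hind : EpsIndivisible SQ ε)
    (m : ℕ) (hm : 0 < m) (hmε : (m : ℝ) ≤ 1/ε)
    (Sm : Type) [MetricSpace Sm] (hSm : IsUrysohnSphereM m Sm) :
    EpsIndivisible Sm (1/(m:ℝ)) := by
  intro k hk χ
  haveI : NeZero m := ⟨hm.ne'⟩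
  obtain ⟨hcnt, hhom, hdistm, huniv⟩ := hSm
  obtain ⟨hcntQ, hhomQ, hdistQ, hunivQ⟩ := hSQ
  haveI := hcnt
  haveI := hcntQ
  have hmR : (0:ℝ) < m := by exact_mod_cast hm
  have hdistQ1 : ∀ x y : SQ, dist x y ≤ 1 := by
    intro x y
    obtain ⟨q, hq0, hq1, hq⟩ := hdistQ x y
    rw [hq]; exact_mod_cast hq1
  -- `rdist m` agrees with `dist` on distances in `distSetM m`
  have hround : ∀ (x y : SQ) (d : ℝ), d ∈ distSetM m → dist x y = d → rdist m x y = d := by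
    rintro x y d ⟨j, hj, rfl⟩ hd
    rw [rdist, hd, mul_div_cancel₀ _ hmR.ne']
    rw [Nat.ceil_natCast]
  -- embed Sm into SQ
  obtain ⟨f, hf⟩ := hunivQ Sm hcnt (by
    intro a b
    obtain ⟨j, hj, hd⟩ := hdistm a b
    refine ⟨(j : ℚ) / m, by positivity, ?_, ?_⟩
    · rw [div_le_one (by exact_mod_cast hm)]; exact_mod_cast hj
    · rw [hd]; push_cast; ring)
  -- embed the rounded SQ into Sm
  obtain ⟨g, hg⟩ := huniv (RoundSpace m SQ) inferInstance (by
    intro a b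
    refine ⟨⌈(m : ℝ) * dist a.val b.val⌉₊, ?_, rfl⟩
    refine Nat.ceil_le.mpr ?_
    calc (m : ℝ) * dist a.val b.val ≤ (m : ℝ) * 1 :=
          mul_le_mul_of_nonneg_left (hdistQ1 _ _) hmR.le
      _ = (m : ℝ) := mul_one _)
  obtain ⟨i, e, he, hpts⟩ := hind k hk (fun y => χ (g ⟨y⟩))
  refine ⟨i, fun z => g ⟨e (f z)⟩, ?_, ?_⟩
  · refine Isometry.of_dist_eq fun z w => ?_
    rw [hg.dist_eq, RoundSpace.dist_def]
    exact hround _ _ _ (hdistm z w) (by rw [he.dist_eq, hf.dist_eq])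
  · intro z
    obtain ⟨x, hxi, hxd⟩ := hpts (f z)
    refine ⟨g ⟨x⟩, hxi, ?_⟩
    rw [hg.dist_eq, RoundSpace.dist_def, rdist, div_le_div_iff_of_pos_right hmR]
    have h1 : (m : ℝ) * dist (e (f z)) x ≤ 1 := by
      calc (m : ℝ) * dist (e (f z)) x ≤ (m : ℝ) * ε :=
            mul_le_mul_of_nonneg_left hxd hmR.le
        _ ≤ 1 := by rw [← le_div_iff₀ hε]; exact hmε
    have h2 : ⌈(m : ℝ) * dist (e (f z)) x⌉₊ ≤ 1 := Nat.ceil_le.mpr (by simpa using h1)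
    exact_mod_cast h2
end
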